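/- arXiv:1201.4512 — 7 statements merged into one kernel-verified Lean document; each statement's English description precedes it below -/
import Mathlib

section
/- Let S be a finite set of points in ℝ^d and z ∈ ℝ^d \ S. Suppose S is a z-containing set and z is in general position with respect to S. Then |A(S)| ≤ (d+1)·|C(S)|. -/
/-- Points of `ℝ^d`. -/
abbrev Pt (d : ℕ) := EuclideanSpace ℝ (Fin d)

/-- `X` is `z`-containing: `z` lies in the interior of the convex hull of `X`. -/
def IsZContaining (d : ℕ) (z : Pt d) (X : Set (Pt d)) : Prop :=
  z ∈ interior (convexHull ℝ X)

/-- `X` is `z`-avoiding: `z` does not lie in the interior of the convex hull of `X`. -/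
def IsZAvoiding (d : ℕ) (z : Pt d) (X : Set (Pt d)) : Prop :=
  z ∉ interior (convexHull ℝ X)

/-- `𝒞(S)`: the collection of minimal `z`-containing subsets of `S`. -/
def MinContaining (d : ℕ) (z : Pt d) (S : Set (Pt d)) : Set (Set (Pt d)) :=
  {C | C ⊆ S ∧ IsZContaining d z C ∧ ∀ Y : Set (Pt d), Y ⊂ C → ¬ IsZContaining d z Y}

/-- `𝒜(S)`: the collection of maximal `z`-avoiding subsets of `S`. -/
def MaxAvoiding (d : ℕ) (z : Pt d) (S : Set (Pt d)) : Set (Set (Pt d)) :=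
  {A | A ⊆ S ∧ IsZAvoiding d z A ∧ ∀ B : Set (Pt d), B ⊆ S → A ⊂ B → ¬ IsZAvoiding d z B}

/-- `z` is in general position with respect to `S`: for every `X ⊆ S` whose affine span
has dimension less than `d`, `z` does not belong to the affine span of `X`. -/
def GenPos (d : ℕ) (z : Pt d) (S : Set (Pt d)) : Prop :=
  ∀ X : Set (Pt d), X ⊆ S → Module.finrank ℝ (vectorSpan ℝ X) < d → z ∉ affineSpan ℝ X

open Set Finset Module

/-- Carathéodory with strictly positive weights, Finset form. -/
lemma exists_posCara {d : ℕ} {X : Set (Pt d)} {x : Pt d} (hx : x ∈ convexHull ℝ X) :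
    ∃ D : Finset (Pt d), ↑D ⊆ X ∧ AffineIndependent ℝ ((↑) : ↥D → Pt d) ∧
      ∃ μ : Pt d → ℝ, (∀ y ∈ D, 0 < μ y) ∧ (∑ y ∈ D, μ y = 1) ∧ ∑ y ∈ D, μ y • y = x := by
  classical
  set D := Caratheodory.minCardFinsetOfMemConvexHull hx with hD
  have hsub : ↑D ⊆ X := Caratheodory.minCardFinsetOfMemConvexHull_subseteq hx
  have hind : AffineIndependent ℝ ((↑) : ↥D → Pt d) :=
    Caratheodory.affineIndependent_minCardFinsetOfMemConvexHull hx
  have hmem : x ∈ convexHull ℝ (↑D : Set (Pt d)) :=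
    Caratheodory.mem_minCardFinsetOfMemConvexHull hx
  rw [Finset.convexHull_eq] at hmem
  obtain ⟨w, hw0, hw1, hwx⟩ := hmem
  have hne : ∀ y ∈ D, w y ≠ 0 := by
    intro y hy hy0
    have hsub' : {i ∈ D | w i ≠ 0} ⊆ D := Finset.filter_subset _ _
    have hlt : #{i ∈ D | w i ≠ 0} < #D := by
      apply Finset.card_lt_card
      refine ⟨hsub', fun hDsub => ?_⟩
      have := hDsub hy
      simp only [Finset.mem_filter] at this
      exact this.2 hy0
    have hmem' : x ∈ convexHull ℝ (↑{i ∈ D | w i ≠ 0} : Set (Pt d)) := by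
      rw [← hwx, ← Finset.centerMass_filter_ne_zero]
      apply Finset.centerMass_mem_convexHull
      · exact fun i hi => hw0 i (hsub' hi)
      · rw [Finset.sum_filter_ne_zero, hw1]; norm_num
      · exact fun i hi => Finset.mem_coe.mpr hi
    have hle := Caratheodory.minCardFinsetOfMemConvexHull_card_le_card hx
      (Set.Subset.trans (Finset.coe_subset.mpr hsub') hsub) hmem'
    rw [← hD] at hle
    omega
  refine ⟨D, hsub, hind, w, fun y hy => (hw0 y hy).lt_of_ne (Ne.symm (hne y hy)), hw1, ?_⟩
  rw [← hwx, Finset.centerMass_eq_of_sum_1 _ id hw1]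
  rfl

/-- finrank of vectorSpan of a finset is at most card - 1. -/
lemma finrank_vectorSpan_finset_le {d : ℕ} (Y : Finset (Pt d)) {n : ℕ} (h : Y.card ≤ n + 1) :
    finrank ℝ (vectorSpan ℝ (↑Y : Set (Pt d))) ≤ n := by
  rcases Y.eq_empty_or_nonempty with rfl | hne
  · rw [Finset.coe_empty, vectorSpan_empty]; simp
  · obtain ⟨m, hm⟩ : ∃ m, Y.card = m + 1 :=
      ⟨Y.card - 1, (Nat.succ_pred_eq_of_pos (Finset.card_pos.mpr hne)).symm⟩
    have h2 := finrank_vectorSpan_range_le ℝ ((↑) : ↥Y → Pt d) (by simpa [Fintype.card_coe] using hm)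
    have hr : Set.range ((↑) : ↥Y → Pt d) = (↑Y : Set (Pt d)) := Subtype.range_coe
    rw [hr] at h2
    omega

/-- From general position: z is not in the affine span of at most d points of S. -/
lemma genpos_small {d : ℕ} {z : Pt d} {S : Set (Pt d)} (hgen : GenPos d z S)
    {Y : Finset (Pt d)} (hYS : ↑Y ⊆ S) (hcard : Y.card ≤ d)
    (hz : z ∈ affineSpan ℝ (↑Y : Set (Pt d))) : False := by
  rcases Y.eq_empty_or_nonempty with rfl | hne
  · rw [Finset.coe_empty, AffineSubspace.span_empty] at hz
    exact AffineSubspace.notMem_bot ℝ (Pt d) z hz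
  · have hd : 1 ≤ d := le_trans (Finset.card_pos.mpr hne) hcard
    have hrk : finrank ℝ (vectorSpan ℝ (↑Y : Set (Pt d))) < d := by
      have := finrank_vectorSpan_finset_le Y (n := d - 1) (by omega)
      omega
    exact hgen _ hYS hrk hz


noncomputable def simplexBasis {d : ℕ} (D : Finset (Pt d))
    (hind : AffineIndependent ℝ ((↑) : ↥D → Pt d)) (hcard : D.card = d + 1) :
    AffineBasis ↥D ℝ (Pt d) :=
  ⟨(↑), hind, hind.affineSpan_eq_top_iff_card_eq_finrank_add_one.mpr
    (by simp [Fintype.card_coe, hcard, finrank_euclideanSpace_fin])⟩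

@[simp] lemma simplexBasis_apply {d : ℕ} {D : Finset (Pt d)}
    (hind : AffineIndependent ℝ ((↑) : ↥D → Pt d)) (hcard : D.card = d + 1) (i : ↥D) :
    simplexBasis D hind hcard i = ↑i := rfl

/-- Barycentric coordinates of a convex/affine combination with weights summing to 1. -/
lemma simplexBasis_coord {d : ℕ} {D : Finset (Pt d)}
    (hind : AffineIndependent ℝ ((↑) : ↥D → Pt d)) (hcard : D.card = d + 1)
    {μ : Pt d → ℝ} (hsum : ∑ y ∈ D, μ y = 1) {x : Pt d} (heq : ∑ y ∈ D, μ y • y = x)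
    (i : ↥D) : (simplexBasis D hind hcard).coord i x = μ ↑i := by
  set b := simplexBasis D hind hcard with hb
  have hsum' : ∑ i : ↥D, μ i.1 = 1 := by
    rw [Finset.sum_coe_sort D (fun y => μ y)]; exact hsum
  have hx : Finset.univ.affineCombination ℝ (fun i : ↥D => (i.1 : Pt d)) (fun i => μ i.1) = x := by
    rw [Finset.univ.affineCombination_eq_linear_combination _ _ hsum']
    rw [Finset.sum_coe_sort D (fun y => μ y • y)]
    exact heq
  have hx' : Finset.univ.affineCombination ℝ (⇑b) (fun i : ↥D => μ i.1) = x := hx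
  rw [← hx', b.coord_apply_combination_of_mem (Finset.mem_univ i) hsum']

lemma range_simplexBasis {d : ℕ} {D : Finset (Pt d)}
    (hind : AffineIndependent ℝ ((↑) : ↥D → Pt d)) (hcard : D.card = d + 1) :
    Set.range ⇑(simplexBasis D hind hcard) = (↑D : Set (Pt d)) := Subtype.range_coe

/-- A point with all barycentric weights positive is in the interior of the convex hull. -/
lemma mem_interior_of_pos_weights {d : ℕ} {D : Finset (Pt d)}
    (hind : AffineIndependent ℝ ((↑) : ↥D → Pt d)) (hcard : D.card = d + 1)
    {μ : Pt d → ℝ} (hpos : ∀ y ∈ D, 0 < μ y) (hsum : ∑ y ∈ D, μ y = 1)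
    {x : Pt d} (heq : ∑ y ∈ D, μ y • y = x) :
    x ∈ interior (convexHull ℝ (↑D : Set (Pt d))) := by
  rw [← range_simplexBasis hind hcard, AffineBasis.interior_convexHull]
  intro i
  rw [simplexBasis_coord hind hcard hsum heq i]
  exact hpos _ i.2

/-- Extraction of a minimal containing simplex from any set whose hull contains z. -/
lemma exists_simplex {d : ℕ} {z : Pt d} {S : Set (Pt d)} (hgen : GenPos d z S)
    {X : Set (Pt d)} (hXS : X ⊆ S) (hx : z ∈ convexHull ℝ X) :
    ∃ C : Finset (Pt d), ↑C ⊆ X ∧ C.card = d + 1 ∧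
      AffineIndependent ℝ ((↑) : ↥C → Pt d) ∧
      z ∈ interior (convexHull ℝ (↑C : Set (Pt d))) := by
  obtain ⟨D, hDX, hind, μ, hpos, hsum, heq⟩ := exists_posCara hx
  have hzc : D.centerMass μ id = z := by
    rw [Finset.centerMass_eq_of_sum_1 _ id hsum]; exact heq
  have hzconv : z ∈ convexHull ℝ (↑D : Set (Pt d)) := by
    rw [← hzc]
    exact Finset.centerMass_mem_convexHull _ (fun i hi => (hpos i hi).le) (by rw [hsum]; norm_num)
      (fun i hi => Finset.mem_coe.mpr hi)
  have hcard_ge : d + 1 ≤ D.card := by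
    by_contra hlt
    exact genpos_small hgen (hDX.trans hXS) (by omega)
      ((convexHull_subset_affineSpan _) hzconv)
  have hcard_le : D.card ≤ d + 1 := by
    have h1 : finrank ℝ (vectorSpan ℝ (↑D : Set (Pt d))) ≤ finrank ℝ (Pt d) :=
      (vectorSpan ℝ (↑D : Set (Pt d))).finrank_le
    obtain ⟨m, hm⟩ : ∃ m, D.card = m + 1 := ⟨D.card - 1, by omega⟩
    have h2 := hind.finrank_vectorSpan (by simpa [Fintype.card_coe] using hm)
    have hr : Set.range ((↑) : ↥D → Pt d) = (↑D : Set (Pt d)) := Subtype.range_coe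
    rw [hr] at h2
    rw [finrank_euclideanSpace_fin] at h1
    omega
  have hcard : D.card = d + 1 := le_antisymm hcard_le hcard_ge
  exact ⟨D, hDX, hcard, hind, mem_interior_of_pos_weights hind hcard hpos hsum heq⟩

/-- A (d+1)-point containing subset of S is a minimal containing set. -/
lemma minContaining_of_simplex {d : ℕ} {z : Pt d} {S : Set (Pt d)} (hS : S.Finite)
    (hgen : GenPos d z S) {C : Finset (Pt d)} (hsub : ↑C ⊆ S) (hcard : C.card = d + 1)
    (hcont : z ∈ interior (convexHull ℝ (↑C : Set (Pt d)))) :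
    (↑C : Set (Pt d)) ∈ MinContaining d z S := by
  refine ⟨hsub, hcont, fun Y hY hYcont => ?_⟩
  have hYfin : Y.Finite := (C.finite_toSet.subset hY.1)
  have hYcard : hYfin.toFinset.card ≤ d := by
    have h1 : Y.ncard < (↑C : Set (Pt d)).ncard := Set.ncard_lt_ncard hY C.finite_toSet
    rw [Set.ncard_coe_finset, hcard] at h1
    have h2 : Y.ncard = hYfin.toFinset.card := Set.ncard_eq_toFinset_card Y hYfin
    omega
  have hz : z ∈ affineSpan ℝ (↑hYfin.toFinset : Set (Pt d)) := by
    rw [Set.Finite.coe_toFinset]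
    exact (convexHull_subset_affineSpan _) (interior_subset hYcont)
  exact genpos_small hgen (by rw [Set.Finite.coe_toFinset]; exact hY.1.trans hsub) hYcard hz

/-- z is not in the convex hull of an avoiding subset of S. -/
lemma not_mem_convexHull_of_avoiding {d : ℕ} {z : Pt d} {S : Set (Pt d)}
    (hgen : GenPos d z S) {A : Set (Pt d)} (hAS : A ⊆ S) (hAv : IsZAvoiding d z A) :
    z ∉ convexHull ℝ A := by
  intro h
  obtain ⟨C, hCA, _, _, hCint⟩ := exists_simplex hgen hAS h
  exact hAv (interior_mono (convexHull_mono hCA) hCint)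

/-- Every minimal containing set is a (d+1)-simplex. -/
lemma minContaining_simplex {d : ℕ} {z : Pt d} {S : Set (Pt d)} (hgen : GenPos d z S)
    {C : Set (Pt d)} (hC : C ∈ MinContaining d z S) :
    ∃ Cf : Finset (Pt d), ↑Cf = C ∧ Cf.card = d + 1 ∧
      affineSpan ℝ C = ⊤ := by
  obtain ⟨hCS, hCcont, hCmin⟩ := hC
  obtain ⟨Cf, hCfC, hcard, hind, hint⟩ := exists_simplex hgen hCS (interior_subset hCcont)
  have heq : (↑Cf : Set (Pt d)) = C := by
    by_contra hne
    exact hCmin _ ⟨hCfC, fun h => hne (le_antisymm hCfC h)⟩ hint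
  refine ⟨Cf, heq, hcard, ?_⟩
  rw [← heq, ← Subtype.range_coe (s := (↑Cf : Set (Pt d)))]
  exact hind.affineSpan_eq_top_iff_card_eq_finrank_add_one.mpr
    (by simp [Fintype.card_coe, hcard, finrank_euclideanSpace_fin])

/-- Maximality characterization: a maximal avoiding set equals the positive side of any
affine functional vanishing at z and positive on it. -/
lemma maxAvoiding_eq_pos_side {d : ℕ} {z : Pt d} {S : Set (Pt d)} (hS : S.Finite)
    {A : Set (Pt d)} (hA : A ∈ MaxAvoiding d z S) (g : Pt d →ᵃ[ℝ] ℝ)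
    (hgz : g z = 0) (hpos : ∀ a ∈ A, 0 < g a) : A = {s ∈ S | 0 < g s} := by
  obtain ⟨hAS, hAv, hAmax⟩ := hA
  set B := {s ∈ S | 0 < g s} with hB
  have hAB : A ⊆ B := fun a ha => ⟨hAS ha, hpos a ha⟩
  have hBS : B ⊆ S := fun b hb => hb.1
  have hBfin : B.Finite := hS.subset hBS
  have hBav : IsZAvoiding d z B := by
    intro hzB
    have hzB' : z ∈ convexHull ℝ B := interior_subset hzB
    have hBne : B.Nonempty := by
      rcases Set.eq_empty_or_nonempty B with h | h
      · rw [h] at hzB'; simp at hzB'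
      · exact h
    have hBfne : hBfin.toFinset.Nonempty := by
      rwa [Set.Finite.toFinset_nonempty]
    obtain ⟨b0, hb0, hb0min⟩ := Finset.exists_min_image hBfin.toFinset g hBfne
    have hmpos : 0 < g b0 := ((hBfin.mem_toFinset).mp hb0).2
    have hsubset : convexHull ℝ B ⊆ ⇑g ⁻¹' (Set.Ici (g b0)) := by
      apply convexHull_min
      · intro b hb
        exact hb0min b (hBfin.mem_toFinset.mpr hb)
      · exact (convex_Ici (g b0)).affine_preimage g
    have hzm := hsubset hzB'
    rw [Set.mem_preimage, hgz] at hzm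
    exact absurd (lt_of_lt_of_le hmpos hzm) (lt_irrefl 0)
  by_contra hne
  exact hAmax B hBS ⟨hAB, fun h => hne (le_antisymm hAB h)⟩ hBav

/-- Affine maps agreeing on an affinely spanning set agree everywhere. -/
lemma affineMap_ext_of_span {d : ℕ} {C : Set (Pt d)} (h : affineSpan ℝ C = ⊤)
    {f g : Pt d →ᵃ[ℝ] ℝ} (he : ∀ x ∈ C, f x = g x) : ∀ y, f y = g y := by
  intro y
  have hQ : affineSpan ℝ C ≤ AffineSubspace.comap (f - g) (AffineSubspace.mk' (0:ℝ) ⊥) := by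
    rw [affineSpan_le]
    intro x hx
    show (f - g) x ∈ AffineSubspace.mk' (0:ℝ) (⊥ : Submodule ℝ ℝ)
    rw [AffineSubspace.mem_mk']
    simp [he x hx, sub_eq_zero]
  rw [h] at hQ
  have hy : y ∈ AffineSubspace.comap (f - g) (AffineSubspace.mk' (0:ℝ) ⊥) :=
    hQ (AffineSubspace.mem_top ℝ (Pt d) y)
  rw [AffineSubspace.mem_comap, AffineSubspace.mem_mk'] at hy
  simpa [sub_eq_zero] using hy

set_option maxHeartbeats 1000000 in
/-- The key charging lemma: every maximal avoiding set is cut out by the barycentric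
coordinate of a vertex of some minimal containing simplex. -/
lemma exists_charge {d : ℕ} {z : Pt d} {S : Set (Pt d)} (hS : S.Finite) (hzS : z ∉ S)
    (hScont : IsZContaining d z S) (hgen : GenPos d z S)
    {A : Set (Pt d)} (hA : A ∈ MaxAvoiding d z S) :
    ∃ (Cf : Finset (Pt d)) (c : Pt d), c ∈ Cf ∧ (↑Cf : Set (Pt d)) ∈ MinContaining d z S ∧
      ∃ f : Pt d →ᵃ[ℝ] ℝ, f c = 1 ∧ (∀ x ∈ Cf, x ≠ c → f x = 0) ∧
        A = {s ∈ S | f s < f z} := by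
  classical
  obtain ⟨hAS, hAv, hAmax⟩ := hA
  have hAfin : A.Finite := hS.subset hAS
  have hznA : z ∉ convexHull ℝ A := not_mem_convexHull_of_avoiding hgen hAS hAv
  have hAneS : A ≠ S := by rintro rfl; exact hAv hScont
  obtain ⟨c, hcS, hcA⟩ : ∃ c, c ∈ S ∧ c ∉ A := by
    by_contra h; push_neg at h
    exact hAneS (le_antisymm hAS fun s hs => h s hs)
  have hzc : z ≠ c := fun h => hzS (h ▸ hcS)
  have hAc : z ∈ interior (convexHull ℝ (insert c A)) := by
    by_contra h
    exact hAmax (insert c A) (Set.insert_subset hcS hAS) (Set.ssubset_insert hcA) h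
  have hAne : A.Nonempty := by
    rcases Set.eq_empty_or_nonempty A with h | h
    · exfalso
      rw [h] at hAc
      have h2 : (insert c (∅ : Set (Pt d))) = {c} := by simp
      rw [h2, convexHull_singleton] at hAc
      exact hzc (Set.mem_singleton_iff.mp (interior_subset hAc))
    · exact h
  -- the ray from z away from c
  obtain ⟨φ, hφ⟩ : ∃ φ : ℝ → Pt d, ∀ t, φ t = z + t • (z - c) := ⟨_, fun t => rfl⟩
  have hφcont : Continuous φ := by
    have : φ = fun t => z + t • (z - c) := funext hφ
    rw [this]
    exact continuous_const.add (continuous_id.smul continuous_const)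
  obtain ⟨T, hTmem⟩ : ∃ T : Set ℝ, ∀ t, t ∈ T ↔ (0 ≤ t ∧ φ t ∈ convexHull ℝ A) :=
    ⟨{t | 0 ≤ t ∧ φ t ∈ convexHull ℝ A}, fun t => Iff.rfl⟩
  -- T is nonempty
  have hTne : T.Nonempty := by
    have hzse := interior_subset hAc
    rw [convexHull_insert hAne, mem_convexJoin] at hzse
    obtain ⟨c', hc', x₀, hx₀, hseg⟩ := hzse
    rw [Set.mem_singleton_iff] at hc'
    subst hc'
    obtain ⟨a1, b1, ha1, hb1, hab1, hz1⟩ := hseg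
    have hb1ne : b1 ≠ 0 := by
      rintro rfl
      rw [add_zero] at hab1
      rw [hab1, zero_smul, add_zero, one_smul] at hz1
      exact hzc hz1.symm
    have hb1pos : 0 < b1 := hb1.lt_of_ne (Ne.symm hb1ne)
    refine ⟨a1 / b1, (hTmem _).mpr ⟨div_nonneg ha1 hb1pos.le, ?_⟩⟩
    have hx₀eq : φ (a1 / b1) = x₀ := by
      have h1 : b1 • x₀ = z - a1 • c' := by rw [← hz1]; abel
      have h2 : x₀ = b1⁻¹ • (z - a1 • c') := by rw [← h1, inv_smul_smul₀ hb1ne]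
      rw [h2, hφ]
      match_scalars <;> field_simp <;> linarith
    rw [hx₀eq]
    exact hx₀
  have hTclosed : IsClosed T := by
    have hTeq : T = Set.Ici 0 ∩ φ ⁻¹' (convexHull ℝ A) := Set.ext fun t => by
      rw [hTmem]; exact Iff.rfl
    rw [hTeq]
    exact isClosed_Ici.inter ((hAfin.isClosed_convexHull ℝ).preimage hφcont)
  have hTbdd : BddBelow T := ⟨0, fun t ht => ((hTmem t).mp ht).1⟩
  obtain ⟨t₀, ht₀def⟩ : ∃ t₀, t₀ = sInf T := ⟨_, rfl⟩
  have ht₀T : t₀ ∈ T := ht₀def ▸ hTclosed.csInf_mem hTne hTbdd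
  have ht₀0 : 0 ≤ t₀ := ((hTmem t₀).mp ht₀T).1
  have ht₀pos : 0 < t₀ := by
    rcases ht₀0.lt_or_eq with h | h
    · exact h
    · exfalso
      apply hznA
      have h2 := ((hTmem t₀).mp ht₀T).2
      rw [← h, hφ] at h2
      simpa using h2
  obtain ⟨w, hwdef⟩ : ∃ w, w = φ t₀ := ⟨_, rfl⟩
  have hwA : w ∈ convexHull ℝ A := hwdef ▸ ((hTmem t₀).mp ht₀T).2
  have hmin : ∀ t, 0 ≤ t → t < t₀ → φ t ∉ convexHull ℝ A := fun t h0 hlt hmem =>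
    absurd (ht₀def ▸ csInf_le hTbdd ((hTmem t).mpr ⟨h0, hmem⟩) : t₀ ≤ t) (not_le.mpr hlt)
  -- Carathéodory for w
  obtain ⟨D, hDA, hDind, μ, hμpos, hμsum, hμw⟩ := exists_posCara hwA
  have hwD : w ∈ convexHull ℝ (↑D : Set (Pt d)) := by
    have hzc' : D.centerMass μ id = w := by
      rw [Finset.centerMass_eq_of_sum_1 _ id hμsum]; exact hμw
    rw [← hzc']
    exact Finset.centerMass_mem_convexHull _ (fun i hi => (hμpos i hi).le)
      (by rw [hμsum]; norm_num) (fun i hi => Finset.mem_coe.mpr hi)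
  -- D has at most d points
  have hDcard_le1 : D.card ≤ d + 1 := by
    have h1 : finrank ℝ (vectorSpan ℝ (↑D : Set (Pt d))) ≤ finrank ℝ (Pt d) :=
      (vectorSpan ℝ (↑D : Set (Pt d))).finrank_le
    have hDne : D.Nonempty := by
      rcases D.eq_empty_or_nonempty with rfl | h
      · exfalso; simp at hwD
      · exact h
    obtain ⟨m, hm⟩ : ∃ m, D.card = m + 1 :=
      ⟨D.card - 1, (Nat.succ_pred_eq_of_pos (Finset.card_pos.mpr hDne)).symm⟩
    have h2 := hDind.finrank_vectorSpan (by simpa [Fintype.card_coe] using hm)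
    have hr : Set.range ((↑) : ↥D → Pt d) = (↑D : Set (Pt d)) := Subtype.range_coe
    rw [hr] at h2
    rw [finrank_euclideanSpace_fin] at h1
    omega
  have hDcard : D.card ≤ d := by
    by_contra h
    have hcard : D.card = d + 1 := by omega
    have hint : w ∈ interior (convexHull ℝ A) :=
      interior_mono (convexHull_mono hDA)
        (mem_interior_of_pos_weights hDind hcard hμpos hμsum hμw)
    have hnb : φ ⁻¹' interior (convexHull ℝ A) ∈ nhds t₀ := by
      apply hφcont.continuousAt.preimage_mem_nhds
      apply isOpen_interior.mem_nhds
      rw [← hwdef]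
      exact hint
    obtain ⟨ε, hε, hball⟩ := Metric.mem_nhds_iff.mp hnb
    have h1 : 0 < min (ε / 2) (t₀ / 2) := lt_min (by linarith) (by linarith)
    have h2 : min (ε / 2) (t₀ / 2) ≤ t₀ / 2 := min_le_right _ _
    have h3 : min (ε / 2) (t₀ / 2) ≤ ε / 2 := min_le_left _ _
    refine hmin (t₀ - min (ε / 2) (t₀ / 2)) (by linarith) (by linarith)
      (interior_subset (hball ?_))
    rw [Metric.mem_ball, Real.dist_eq]
    have h4 : t₀ - min (ε / 2) (t₀ / 2) - t₀ = -(min (ε / 2) (t₀ / 2)) := by ring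
    rw [h4, abs_neg, abs_of_pos h1]
    linarith
  -- the affine span facts
  obtain ⟨θ, hθdef⟩ : ∃ θ : ℝ, θ = t₀ / (1 + t₀) := ⟨_, rfl⟩
  have h1t : (0:ℝ) < 1 + t₀ := by linarith
  have hθ0 : 0 < θ := hθdef ▸ div_pos ht₀pos h1t
  have hθ1 : θ < 1 := hθdef ▸ (div_lt_one h1t).mpr (by linarith)
  have hzw : z = w + θ • (c - w) := by
    rw [hwdef, hφ, hθdef]
    match_scalars <;> field_simp <;> ring
  have hzaff : z ∈ affineSpan ℝ (insert c (↑D : Set (Pt d))) := by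
    have hwaff : w ∈ affineSpan ℝ (insert c (↑D : Set (Pt d))) :=
      affineSpan_mono ℝ (Set.subset_insert c _) ((convexHull_subset_affineSpan _) hwD)
    have hcaff : c ∈ affineSpan ℝ (insert c (↑D : Set (Pt d))) :=
      subset_affineSpan ℝ _ (Set.mem_insert c _)
    have hl := AffineMap.lineMap_mem θ hwaff hcaff
    have heq : AffineMap.lineMap w c θ = z := by
      rw [AffineMap.lineMap_apply, hzw]
      simp only [vsub_eq_sub, vadd_eq_add]
      abel
    rwa [heq] at hl
  have hcD : c ∉ D := by
    intro h
    have hz2 : z ∈ affineSpan ℝ (↑D : Set (Pt d)) := by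
      rwa [Set.insert_eq_self.mpr (Finset.mem_coe.mpr h)] at hzaff
    exact genpos_small hgen (hDA.trans hAS) hDcard hz2
  have hCfS : (↑(insert c D) : Set (Pt d)) ⊆ S := by
    rw [Finset.coe_insert]
    exact Set.insert_subset hcS (hDA.trans hAS)
  have hzaff' : z ∈ affineSpan ℝ (↑(insert c D) : Set (Pt d)) := by
    rwa [Finset.coe_insert]
  have hCfcard : (insert c D).card = d + 1 := by
    have hle : (insert c D).card ≤ d + 1 := by
      rw [Finset.card_insert_of_notMem hcD]; omega
    have hge : ¬ ((insert c D).card ≤ d) := fun h => genpos_small hgen hCfS h hzaff'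
    omega
  have hrk : finrank ℝ (vectorSpan ℝ (↑(insert c D) : Set (Pt d))) = d := by
    have hle := finrank_vectorSpan_finset_le (insert c D) (n := d) (by omega)
    have hge : ¬ (finrank ℝ (vectorSpan ℝ (↑(insert c D) : Set (Pt d))) < d) :=
      fun h => hgen _ hCfS h hzaff'
    omega
  have hCind : AffineIndependent ℝ ((↑) : ↥(insert c D) → Pt d) := by
    rw [affineIndependent_iff_finrank_vectorSpan_eq ℝ _
      (by simp [Fintype.card_coe, hCfcard] : Fintype.card ↥(insert c D) = d + 1)]
    rw [show Set.range ((↑) : ↥(insert c D) → Pt d) = (↑(insert c D) : Set (Pt d)) from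
      Subtype.range_coe]
    exact hrk
  -- weights of z over insert c D
  obtain ⟨W, hWc, hWD⟩ : ∃ W : Pt d → ℝ, W c = θ ∧ ∀ x ∈ D, W x = (1 - θ) * μ x :=
    ⟨fun x => if x = c then θ else (1 - θ) * μ x, if_pos rfl,
      fun x hx => if_neg (by rintro rfl; exact hcD hx)⟩
  have hWsum : ∑ x ∈ insert c D, W x = 1 := by
    rw [Finset.sum_insert hcD, hWc, Finset.sum_congr rfl hWD, ← Finset.mul_sum, hμsum]
    ring
  have hWz : ∑ x ∈ insert c D, W x • x = z := by
    rw [Finset.sum_insert hcD, hWc]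
    have hstep : ∑ x ∈ D, W x • x = (1 - θ) • ∑ x ∈ D, μ x • x := by
      rw [Finset.smul_sum]
      exact Finset.sum_congr rfl fun x hx => by rw [hWD x hx, mul_smul]
    rw [hstep, hμw, hzw]
    match_scalars <;> ring
  have hWpos : ∀ x ∈ insert c D, 0 < W x := by
    intro x hx
    rcases Finset.mem_insert.mp hx with rfl | hx
    · rw [hWc]; exact hθ0
    · rw [hWD x hx]; exact mul_pos (by linarith) (hμpos x hx)
  have hzint : z ∈ interior (convexHull ℝ (↑(insert c D) : Set (Pt d))) :=
    mem_interior_of_pos_weights hCind hCfcard hWpos hWsum hWz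
  have hCmem : (↑(insert c D) : Set (Pt d)) ∈ MinContaining d z S :=
    minContaining_of_simplex hS hgen hCfS hCfcard hzint
  -- the barycentric coordinate of c
  have hcCf : c ∈ insert c D := Finset.mem_insert_self c D
  obtain ⟨b, hb⟩ : ∃ b, b = simplexBasis (insert c D) hCind hCfcard := ⟨_, rfl⟩
  obtain ⟨f, hf⟩ : ∃ f : Pt d →ᵃ[ℝ] ℝ, f = b.coord ⟨c, hcCf⟩ := ⟨_, rfl⟩
  have hfc : f c = 1 := by
    rw [hf, hb]
    simpa using (simplexBasis (insert c D) hCind hCfcard).coord_apply_eq ⟨c, hcCf⟩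
  have hf0 : ∀ x ∈ insert c D, x ≠ c → f x = 0 := by
    intro x hx hxc
    rw [hf, hb]
    have hne : (⟨c, hcCf⟩ : ↥(insert c D)) ≠ ⟨x, hx⟩ :=
      fun h => hxc (congrArg Subtype.val h).symm
    simpa using (simplexBasis (insert c D) hCind hCfcard).coord_apply_ne hne
  have hfz : f z = θ := by
    rw [hf, hb, simplexBasis_coord hCind hCfcard hWsum hWz ⟨c, hcCf⟩]
    exact hWc
  -- the key visibility inequality
  have hkey : ∀ a ∈ A, f a ≤ 0 := by
    intro a haA
    by_contra hfa'
    push_neg at hfa'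
    obtain ⟨α, hα⟩ : ∃ α : Pt d → ℝ, ∀ (x) (hx : x ∈ insert c D), α x = b.coord ⟨x, hx⟩ a :=
      ⟨fun x => if hx : x ∈ insert c D then b.coord ⟨x, hx⟩ a else 0, fun x hx => dif_pos hx⟩
    have hαc : α c = f a := by rw [hα c hcCf, hf]
    have hαcpos : 0 < α c := by rw [hαc]; exact hfa'
    have hαsum : ∑ x ∈ insert c D, α x = 1 := by
      have h1 : ∑ i : ↥(insert c D), b.coord i a = 1 := b.sum_coord_apply_eq_one a
      calc ∑ x ∈ insert c D, α x = ∑ i : ↥(insert c D), α i.1 :=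
            (Finset.sum_coe_sort (insert c D) α).symm
        _ = ∑ i : ↥(insert c D), b.coord i a :=
            Finset.sum_congr rfl fun i _ => hα i.1 i.2
        _ = 1 := h1
    have hαa : ∑ x ∈ insert c D, α x • x = a := by
      have h1 : ∑ i : ↥(insert c D), b.coord i a • b i = a := by
        rw [hb]
        exact (simplexBasis (insert c D) hCind hCfcard).linear_combination_coord_eq_self a
      calc ∑ x ∈ insert c D, α x • x = ∑ i : ↥(insert c D), α i.1 • (i.1 : Pt d) :=
            (Finset.sum_coe_sort (insert c D) (fun x => α x • x)).symm
        _ = ∑ i : ↥(insert c D), b.coord i a • b i := by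
            refine Finset.sum_congr rfl fun i _ => ?_
            rw [hα i.1 i.2, hb]
            rfl
        _ = a := h1
    have haD : a ∉ D := by
      intro h
      have hac : a ≠ c := fun h' => hcA (h' ▸ haA)
      have := hf0 a (Finset.mem_insert_of_mem h) hac
      linarith
    have hDsum_α : ∑ x ∈ D, α x = 1 - α c := by
      rw [Finset.sum_insert hcD] at hαsum
      linarith
    have hDsum_αx : ∑ x ∈ D, α x • x = a - α c • c := by
      rw [Finset.sum_insert hcD] at hαa
      rw [← hαa]; abel
    -- choose a small positive s
    have e1 : ∀ᶠ s in nhds (0:ℝ), s * (α c * (1 + t₀)) < t₀ := by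
      have htend : Filter.Tendsto (fun s : ℝ => s * (α c * (1 + t₀))) (nhds 0) (nhds 0) := by
        have hmul := (continuous_id.mul (continuous_const : Continuous fun _ : ℝ =>
          α c * (1 + t₀))).tendsto (0:ℝ)
        simpa [Pi.mul_def] using hmul
      exact htend.eventually_lt_const ht₀pos
    have e2 : ∀ᶠ s in nhds (0:ℝ), ∀ x ∈ D, s * α x < (1 - s * α c) * μ x := by
      rw [Finset.eventually_all]
      intro x hx
      have htend1 : Filter.Tendsto (fun s : ℝ => s * α x) (nhds 0) (nhds 0) := by
        have hmul := (continuous_id.mul (continuous_const : Continuous fun _ : ℝ =>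
          α x)).tendsto (0:ℝ)
        simpa [Pi.mul_def] using hmul
      have htend2 : Filter.Tendsto (fun s : ℝ => (1 - s * α c) * μ x) (nhds 0) (nhds (μ x)) := by
        have hc2 : Continuous (fun s : ℝ => (1 - s * α c) * μ x) := by fun_prop
        have := hc2.tendsto (0:ℝ)
        simpa using this
      exact htend1.eventually_lt htend2 (hμpos x hx)
    have e3 : ∀ᶠ s in nhdsWithin (0:ℝ) (Set.Ioi 0),
        (s * (α c * (1 + t₀)) < t₀ ∧ ∀ x ∈ D, s * α x < (1 - s * α c) * μ x) ∧ 0 < s :=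
      ((e1.and e2).filter_mono nhdsWithin_le_nhds).and
        (eventually_mem_nhdsWithin.mono fun s hs => hs)
    obtain ⟨s, ⟨⟨hcond1, hcond2⟩, hs0⟩⟩ := e3.exists
    have ht0 : 0 < t₀ - s * (α c * (1 + t₀)) := by linarith
    have htlt : t₀ - s * (α c * (1 + t₀)) < t₀ := by
      have : 0 < s * (α c * (1 + t₀)) := mul_pos hs0 (mul_pos hαcpos h1t)
      linarith
    obtain ⟨ω, hωa, hωD⟩ : ∃ ω : Pt d → ℝ, ω a = s ∧
        ∀ x ∈ D, ω x = (1 - s * α c) * μ x - s * α x :=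
      ⟨fun x => if x = a then s else (1 - s * α c) * μ x - s * α x, if_pos rfl,
        fun x hx => if_neg (by rintro rfl; exact haD hx)⟩
    have hωsum : ∑ x ∈ insert a D, ω x = 1 := by
      rw [Finset.sum_insert haD, hωa, Finset.sum_congr rfl hωD, Finset.sum_sub_distrib,
        ← Finset.mul_sum, ← Finset.mul_sum, hμsum, hDsum_α]
      ring
    have hωpos : ∀ x ∈ insert a D, 0 ≤ ω x := by
      intro x hx
      rcases Finset.mem_insert.mp hx with rfl | hx
      · rw [hωa]; exact hs0.le
      · rw [hωD x hx]
        have := hcond2 x hx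
        linarith
    have hωy : ∑ x ∈ insert a D, ω x • x = φ (t₀ - s * (α c * (1 + t₀))) := by
      rw [Finset.sum_insert haD, hωa]
      have hsplit : ∑ x ∈ D, ω x • x =
          (1 - s * α c) • (∑ x ∈ D, μ x • x) - s • (∑ x ∈ D, α x • x) := by
        rw [Finset.smul_sum, Finset.smul_sum, ← Finset.sum_sub_distrib]
        exact Finset.sum_congr rfl fun x hx => by rw [hωD x hx, sub_smul, mul_smul, mul_smul]
      rw [hsplit, hμw, hDsum_αx]
      have hweq : w = z + t₀ • (z - c) := by rw [hwdef, hφ]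
      rw [hweq, hφ]
      match_scalars <;> ring
    have hφtA : φ (t₀ - s * (α c * (1 + t₀))) ∈ convexHull ℝ A := by
      have hcm : (insert a D).centerMass ω id = φ (t₀ - s * (α c * (1 + t₀))) := by
        rw [Finset.centerMass_eq_of_sum_1 _ id hωsum]; exact hωy
      rw [← hcm]
      apply Finset.centerMass_mem_convexHull _ hωpos (by rw [hωsum]; norm_num)
      intro x hx
      rcases Finset.mem_insert.mp hx with rfl | hx
      · exact haA
      · exact hDA hx
    exact hmin _ ht0.le htlt hφtA
  -- conclude
  obtain ⟨g, hg⟩ : ∃ g : Pt d →ᵃ[ℝ] ℝ, ∀ x, g x = θ - f x :=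
    ⟨AffineMap.const ℝ (Pt d) θ - f, fun x => rfl⟩
  have hgz : g z = 0 := by rw [hg, hfz, sub_self]
  have hgpos : ∀ a ∈ A, 0 < g a := fun a ha => by
    rw [hg]; have := hkey a ha; linarith
  have hAeq := maxAvoiding_eq_pos_side hS ⟨hAS, hAv, hAmax⟩ g hgz hgpos
  refine ⟨insert c D, c, hcCf, hCmem, f, hfc, hf0, ?_⟩
  rw [hAeq]
  ext x
  simp only [Set.mem_setOf_eq, hg x, hfz]
  constructor
  · rintro ⟨hx1, hx2⟩; exact ⟨hx1, by linarith⟩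
  · rintro ⟨hx1, hx2⟩; exact ⟨hx1, by linarith⟩

theorem maxAvoiding_card_le_d_add_one_mul_minContaining_card
    (d : ℕ) (S : Set (Pt d)) (hS : S.Finite) (z : Pt d) (hzS : z ∉ S)
    (hScont : IsZContaining d z S) (hgen : GenPos d z S) :
    (MaxAvoiding d z S).ncard ≤ (d + 1) * (MinContaining d z S).ncard := by

  classical
  have key : ∀ A ∈ MaxAvoiding d z S,
      ∃ (Cf : Finset (Pt d)) (c : Pt d), c ∈ Cf ∧ (↑Cf : Set (Pt d)) ∈ MinContaining d z S ∧
        ∃ f : Pt d →ᵃ[ℝ] ℝ, f c = 1 ∧ (∀ x ∈ Cf, x ≠ c → f x = 0) ∧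
          A = {s ∈ S | f s < f z} :=
    fun A hA => exists_charge hS hzS hScont hgen hA
  choose Cf cc hcc hCmem ff hff1 hff0 hform using key
  have h𝒜fin : (MaxAvoiding d z S).Finite :=
    hS.finite_subsets.subset fun A hA => hA.1
  have h𝒞fin : (MinContaining d z S).Finite :=
    hS.finite_subsets.subset fun C hC => hC.1
  obtain ⟨CF, hCF⟩ : ∃ CF : (C : Set (Pt d)) → C ∈ MinContaining d z S → Finset (Pt d),
      ∀ C hC, ↑(CF C hC) = C ∧ (CF C hC).card = d + 1 := by
    have h := fun C (hC : C ∈ MinContaining d z S) => minContaining_simplex hgen hC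
    choose CF h1 h2 h3 using h
    exact ⟨CF, fun C hC => ⟨h1 C hC, h2 C hC⟩⟩
  -- the target finset of pairs
  set TF : Finset (Set (Pt d) × Pt d) :=
    h𝒞fin.toFinset.attach.biUnion
      (fun C => ({C.1} : Finset (Set (Pt d))) ×ˢ CF C.1 (h𝒞fin.mem_toFinset.mp C.2)) with hTF
  -- the charging map
  have hmap : ∀ A (hA : A ∈ MaxAvoiding d z S),
      ((↑(Cf A hA) : Set (Pt d)), cc A hA) ∈ TF := by
    intro A hA
    rw [hTF, Finset.mem_biUnion]
    refine ⟨⟨↑(Cf A hA), h𝒞fin.mem_toFinset.mpr (hCmem A hA)⟩, Finset.mem_attach _ _, ?_⟩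
    refine Finset.mem_product.mpr ⟨Finset.mem_singleton_self _, ?_⟩
    have hcoe := (hCF (↑(Cf A hA)) (hCmem A hA)).1
    have : cc A hA ∈ (↑(CF (↑(Cf A hA)) (hCmem A hA)) : Set (Pt d)) := by
      rw [hcoe]
      exact Finset.mem_coe.mpr (hcc A hA)
    exact Finset.mem_coe.mp this
  -- injectivity
  have hinj : Set.InjOn
      (fun A => if hA : A ∈ MaxAvoiding d z S then ((↑(Cf A hA) : Set (Pt d)), cc A hA)
        else (∅, z)) (MaxAvoiding d z S) := by
    intro A hA A' hA' heq
    simp only [dif_pos hA, dif_pos hA', Prod.mk.injEq] at heq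
    obtain ⟨hset, hcEq⟩ := heq
    obtain ⟨Cf0, hCf0, hcard0, hspan⟩ := minContaining_simplex hgen (hCmem A hA)
    have heqfun : ∀ y, ff A hA y = ff A' hA' y := by
      apply affineMap_ext_of_span hspan
      intro x hx
      have hxA : x ∈ Cf A hA := hx
      have hxA' : x ∈ Cf A' hA' := by
        have h2 : x ∈ (↑(Cf A' hA') : Set (Pt d)) := hset ▸ hx
        exact h2
      by_cases hxc : x = cc A hA
      · rw [hxc, hff1 A hA, hcEq, hff1 A' hA']
      · rw [hff0 A hA x hxA hxc, hff0 A' hA' x hxA' (by rw [← hcEq]; exact hxc)]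
    rw [hform A hA, hform A' hA']
    ext x
    simp only [Set.mem_setOf_eq, heqfun x, heqfun z]
  -- counting
  have hTFcard : TF.card ≤ (d + 1) * (MinContaining d z S).ncard := by
    calc TF.card ≤ ∑ C ∈ h𝒞fin.toFinset.attach,
          (({C.1} : Finset (Set (Pt d))) ×ˢ CF C.1 (h𝒞fin.mem_toFinset.mp C.2)).card :=
        Finset.card_biUnion_le
      _ ≤ h𝒞fin.toFinset.attach.card • (d + 1) := by
          apply Finset.sum_le_card_nsmul
          intro C _
          rw [Finset.card_product, Finset.card_singleton, one_mul,
            (hCF C.1 (h𝒞fin.mem_toFinset.mp C.2)).2]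
      _ = (MinContaining d z S).ncard * (d + 1) := by
          rw [smul_eq_mul, Finset.card_attach, Set.ncard_eq_toFinset_card _ h𝒞fin]
      _ = (d + 1) * (MinContaining d z S).ncard := Nat.mul_comm _ _
  have hle : (MaxAvoiding d z S).ncard ≤ (↑TF : Set (Set (Pt d) × Pt d)).ncard :=
    Set.ncard_le_ncard_of_injOn
      (fun A => if hA : A ∈ MaxAvoiding d z S then ((↑(Cf A hA) : Set (Pt d)), cc A hA)
        else (∅, z))
      (fun A hA => by simp only [dif_pos hA]; exact Finset.mem_coe.mpr (hmap A hA))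
      hinj TF.finite_toSet
  rw [Set.ncard_coe_finset] at hle
  exact hle.trans hTFcard
end

section
/- Let S be a finite set of points in ℝ^d and let z ∈ ℝ^d \ S be in general position with respect to S. If either S is z-avoiding, or S is z-containing and |S| = d + 1, then |A(S)| = d·|C(S)| + 1. -/
lemma small_interior_empty (d : ℕ) (X : Set (Pt d)) (hX : X.Finite) (h : X.ncard ≤ d) :
    interior (convexHull ℝ X) = ∅ := by
  rw [← Set.not_nonempty_iff_eq_empty]
  rintro hne
  have hXne : X.Nonempty := by
    rcases X.eq_empty_or_nonempty with rfl | h'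
    · simp [convexHull_empty] at hne
    · exact h'
  have htop : affineSpan ℝ X = ⊤ := by
    have := (convex_convexHull ℝ X).interior_nonempty_iff_affineSpan_eq_top.mp hne
    rwa [affineSpan_convexHull] at this
  have hv : vectorSpan ℝ X = ⊤ := by
    rw [← direction_affineSpan, htop, AffineSubspace.direction_top]
  have h1 : 0 < X.ncard := (Set.ncard_pos hX).mpr hXne
  classical
  have hcard : hX.toFinset.card = (X.ncard - 1) + 1 := by
    have := Set.ncard_eq_toFinset_card X hX
    omega
  have hle : Module.finrank ℝ (vectorSpan ℝ X) ≤ X.ncard - 1 := by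
    have := finrank_vectorSpan_image_finset_le ℝ (id : Pt d → Pt d) hX.toFinset hcard
    have himg : (↑(hX.toFinset.image id) : Set (Pt d)) = X := by
      simp [Finset.image_id, Set.Finite.coe_toFinset]
    rwa [himg] at this
  rw [hv] at hle
  have : Module.finrank ℝ (⊤ : Submodule ℝ (Pt d)) = d := by
    simp [finrank_euclideanSpace_fin]
  omega

theorem maxAvoiding_card_eq_of_avoiding_or_simplex
    (d : ℕ) (S : Set (Pt d)) (hS : S.Finite) (z : Pt d) (hzS : z ∉ S)
    (hgen : GenPos d z S)
    (hcase : IsZAvoiding d z S ∨ (IsZContaining d z S ∧ S.ncard = d + 1)) :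
    (MaxAvoiding d z S).ncard = d * (MinContaining d z S).ncard + 1 := by
  rcases hcase with hA | ⟨hC, hcard⟩
  · -- S itself is z-avoiding
    have hMA : MaxAvoiding d z S = {S} := by
      ext A
      constructor
      · rintro ⟨hA1, hA2, hA3⟩
        by_contra hne
        exact hA3 S le_rfl ⟨hA1, fun h => hne (Set.mem_singleton_iff.mpr
          (le_antisymm hA1 h))⟩ hA
      · rintro rfl
        exact ⟨le_rfl, hA, fun B hB hSB _ => hSB.2 hB⟩
    have hMC : MinContaining d z S = ∅ := by
      ext C
      simp only [Set.mem_empty_iff_false, iff_false]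
      rintro ⟨hC1, hC2, _⟩
      exact hA (interior_mono (convexHull_mono hC1) hC2)
    rw [hMA, hMC, Set.ncard_singleton, Set.ncard_empty]
    simp
  · -- S is z-containing with |S| = d+1
    have hsmall : ∀ Y : Set (Pt d), Y ⊂ S → IsZAvoiding d z Y ∧ ¬ IsZContaining d z Y := by
      intro Y hY
      have hYfin : Y.Finite := hS.subset hY.1
      have hYcard : Y.ncard ≤ d := by
        have := Set.ncard_lt_ncard hY hS
        omega
      have := small_interior_empty d Y hYfin hYcard
      constructor
      · intro h; rw [this] at h; exact h
      · intro h; have h2 : z ∈ (∅ : Set (Pt d)) := this ▸ h; exact h2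
    have hMC : MinContaining d z S = {S} := by
      ext C
      constructor
      · rintro ⟨hC1, hC2, _⟩
        by_contra hne
        exact (hsmall C ⟨hC1, fun h => hne (le_antisymm hC1 h)⟩).2 hC2
      · rintro rfl
        exact ⟨le_rfl, hC, fun Y hY => (hsmall Y hY).2⟩
    have hMA : MaxAvoiding d z S = (fun x => S \ {x}) '' S := by
      ext A
      constructor
      · rintro ⟨hA1, hA2, hA3⟩
        have hne : A ≠ S := by rintro rfl; exact hA2 hC
        obtain ⟨x, hxS, hxA⟩ := Set.exists_of_ssubset ⟨hA1, fun h => hne (le_antisymm hA1 h)⟩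
        refine ⟨x, hxS, ?_⟩
        have hsub : A ⊆ S \ {x} := fun y hy =>
          ⟨hA1 hy, fun h => hxA (h ▸ hy)⟩
        by_contra hne2
        have hss : A ⊂ S \ {x} := ⟨hsub, fun h => hne2 (by simpa using (le_antisymm hsub h).symm)⟩
        have hdiff : S \ {x} ⊂ S := Set.sdiff_singleton_ssubset.mpr hxS
        exact hA3 (S \ {x}) Set.diff_subset hss (hsmall _ hdiff).1
      · rintro ⟨x, hxS, rfl⟩
        refine ⟨Set.diff_subset, (hsmall _ (Set.sdiff_singleton_ssubset.mpr hxS)).1, ?_⟩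
        intro B hB hssB
        have hxB : x ∈ B := by
          by_contra hxB
          exact hssB.2 fun y hy => ⟨hB hy, fun h => hxB (h ▸ hy)⟩
        have hBS : B = S := le_antisymm hB (fun y hy => by
          by_cases h : y = x
          · exact h ▸ hxB
          · exact hssB.1 ⟨hy, h⟩)
        rw [hBS]
        intro h; exact h hC
    have hinj : Set.InjOn (fun x => S \ {x}) S := by
      intro x hx y hy h
      dsimp only at h
      by_contra hne
      have : x ∈ S \ {y} := ⟨hx, hne⟩
      rw [← h] at this
      exact this.2 rfl
    rw [hMA, hMC, Set.ncard_image_of_injOn hinj, hcard, Set.ncard_singleton]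
    ring
end

section
/- Let S be a finite set of points in ℝ^d and let z ∈ ℝ^d \ S be in general position with respect to S. If S is z-containing and |S| = d + 2, then |A(S)| = d·|C(S)| − d + 1. -/
set_option maxHeartbeats 1000000 in
lemma setup (d : ℕ) (S : Set (Pt d)) (hS : S.Finite) (z : Pt d)
    (hgen : GenPos d z S) (hScont : IsZContaining d z S) (hcard : S.ncard = d + 2) :
    ∃ p q : Pt d, p ∈ S ∧ q ∈ S ∧ p ≠ q ∧
      IsZContaining d z (S \ {p}) ∧ IsZContaining d z (S \ {q}) ∧
      ∀ X, X ⊆ S → IsZContaining d z X → X = S ∨ X = S \ {p} ∨ X = S \ {q} := by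
  classical
  -- d ≥ 1
  have hd : 1 ≤ d := by
    by_contra hd0
    push_neg at hd0
    obtain rfl : d = 0 := by omega
    obtain ⟨a, -, b, -, hab⟩ := (Set.one_lt_ncard hS).mp (by omega)
    exact hab (PiLp.ext fun i => i.elim0)
  -- enumeration of S
  have hcard' : hS.toFinset.card = d + 2 := by
    rw [← Set.ncard_eq_toFinset_card S hS]
    exact hcard
  let e := hS.toFinset.equivFinOfCardEq hcard'
  set x : Fin (d + 2) → Pt d := fun i => (e.symm i : Pt d) with hxdef
  have hxinj : Function.Injective x := fun i j h =>
    e.symm.injective (Subtype.coe_injective h)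
  have hxS : ∀ i, x i ∈ S := fun i => hS.mem_toFinset.mp (e.symm i).2
  have hxrange : Set.range x = S := by
    apply Set.Subset.antisymm
    · rintro _ ⟨i, rfl⟩; exact hxS i
    · intro a ha
      obtain ⟨i, hi⟩ := e.symm.surjective ⟨a, hS.mem_toFinset.mpr ha⟩
      exact ⟨i, by show (e.symm i : Pt d) = a; rw [hi]⟩
  have himg : ∀ I : Finset (Fin (d + 2)), (x '' ↑I) ⊆ S := by
    rintro I _ ⟨i, -, rfl⟩; exact hxS i
  -- small index sets cannot capture z
  have key0 : ∀ I : Finset (Fin (d + 2)), I.card ≤ d → z ∉ convexHull ℝ (x '' ↑I) := by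
    intro I hI hz
    have hzspan : z ∈ affineSpan ℝ (x '' ↑I) := convexHull_subset_affineSpan _ hz
    have hrank : Module.finrank ℝ (vectorSpan ℝ (x '' ↑I)) < d := by
      rcases Nat.eq_zero_or_pos I.card with h0 | hpos
      · rw [Finset.card_eq_zero.mp h0]
        have h0' : vectorSpan ℝ (x '' ↑(∅ : Finset (Fin (d + 2)))) = ⊥ := by
          simp [vectorSpan_empty]
        rw [h0', finrank_bot]
        omega
      · have h2 := finrank_vectorSpan_image_finset_le ℝ x I (n := I.card - 1) (by omega)
        rw [Finset.coe_image] at h2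
        omega
    exact hgen _ (himg I) hrank hzspan
  -- membership in convex hulls via coordinates
  have memConv : ∀ I : Finset (Fin (d + 2)),
      z ∈ convexHull ℝ (x '' ↑I) ↔
      ∃ w : Fin (d + 2) → ℝ, (∀ i, 0 ≤ w i) ∧ (∀ i ∉ I, w i = 0) ∧
        ∑ i, w i = 1 ∧ ∑ i, w i • x i = z := by
    intro I
    constructor
    · intro hz
      rw [← Finset.coe_image, Finset.convexHull_eq] at hz
      obtain ⟨w, hw0, hw1, hwz⟩ := hz
      refine ⟨fun i => if i ∈ I then w (x i) else 0, ?_, ?_, ?_, ?_⟩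
      · intro i
        dsimp only
        split
        · exact hw0 _ (Finset.mem_image_of_mem x ‹_›)
        · exact le_refl 0
      · intro i hi
        simp [hi]
      · rw [Finset.sum_ite_mem, Finset.univ_inter,
          Finset.sum_image (fun a _ b _ h => hxinj h)] at *
        exact hw1
      · have hsplit : ∀ i, (if i ∈ I then w (x i) else 0) • x i
            = if i ∈ I then w (x i) • x i else 0 := by
          intro i; split <;> simp
        rw [Finset.sum_congr rfl (fun i _ => hsplit i), Finset.sum_ite_mem, Finset.univ_inter]
        rw [Finset.centerMass_eq_of_sum_1 _ id hw1] at hwz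
        rw [Finset.sum_image (fun a _ b _ h => hxinj h)] at hwz
        exact hwz
    · rintro ⟨w, hw0, hwI, hw1, hwz⟩
      have hsub : I ⊆ Finset.univ := Finset.subset_univ I
      have hz' : ∑ i ∈ I, w i • x i = z := by
        rw [← hwz]
        exact Finset.sum_subset hsub (fun i _ hi => by rw [hwI i hi, zero_smul])
      have hsum : ∑ i ∈ I, w i = 1 := by
        rw [← hw1]
        exact Finset.sum_subset hsub (fun i _ hi => hwI i hi)
      have hmem := I.centerMass_mem_convexHull (fun i _ => hw0 i)
        (by rw [hsum]; exact one_pos) (fun i hi => Set.mem_image_of_mem x (by exact hi))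
      rwa [Finset.centerMass_eq_of_sum_1 _ x hsum, hz'] at hmem
  -- interior membership from positive coordinates on a (d+1)-set
  have contain : ∀ (J : Finset (Fin (d + 2))) (w : Fin (d + 2) → ℝ), J.card = d + 1 →
      (∀ i ∈ J, 0 < w i) → (∀ i ∉ J, w i = 0) → ∑ i, w i = 1 → ∑ i, w i • x i = z →
      z ∈ interior (convexHull ℝ (x '' ↑J)) := by
    intro J w hJcard hwpos hw0 hw1 hwz
    have hzconv : z ∈ convexHull ℝ (x '' ↑J) :=
      (memConv J).mpr ⟨w, fun i => by
        by_cases h : i ∈ J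
        · exact (hwpos i h).le
        · exact (hw0 i h).ge, hw0, hw1, hwz⟩
    have hcardJ : Fintype.card ↥J = d + 1 := by simp [hJcard]
    have hrange : Set.range (fun i : ↥J => x ↑i) = x '' ↑J :=
      (Set.image_eq_range x (↑J : Set (Fin (d + 2)))).symm
    have hind : AffineIndependent ℝ (fun i : ↥J => x ↑i) := by
      by_contra hni
      have hle := (finrank_vectorSpan_le_iff_not_affineIndependent ℝ
        (fun i : ↥J => x ↑i) (n := d - 1) (by omega)).mpr hni
      rw [hrange] at hle
      exact hgen _ (himg J) (by omega) (convexHull_subset_affineSpan _ hzconv)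
    have htot : affineSpan ℝ (Set.range (fun i : ↥J => x ↑i)) = ⊤ := by
      rw [hind.affineSpan_eq_top_iff_card_eq_finrank_add_one, hcardJ,
        finrank_euclideanSpace_fin]
    let b : AffineBasis ↥J ℝ (Pt d) := ⟨fun i : ↥J => x ↑i, hind, htot⟩
    have hbeq : Set.range ⇑b = x '' ↑J := hrange
    rw [← hbeq, b.interior_convexHull]
    have hsumJ : ∑ i : ↥J, w ↑i = 1 := by
      rw [Finset.sum_coe_sort J w]
      rw [← hw1]
      exact Finset.sum_subset (Finset.subset_univ J) (fun i _ hi => hw0 i hi)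
    have hz' : z = Finset.univ.affineCombination ℝ ⇑b (fun i : ↥J => w ↑i) := by
      rw [Finset.univ.affineCombination_eq_linear_combination _ _ hsumJ]
      show z = ∑ i : ↥J, w ↑i • x ↑i
      rw [← hwz]
      rw [Finset.sum_coe_sort J (fun i => w i • x i)]
      exact (Finset.sum_subset (Finset.subset_univ J)
        (fun i _ hi => by rw [hw0 i hi, zero_smul])).symm
    rw [Set.mem_setOf_eq]
    intro i
    rw [hz', b.coord_apply_combination_of_mem (Finset.mem_univ i) hsumJ]
    exact hwpos ↑i i.2
  -- a representation of z with minimal support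
  have hzS' : z ∈ convexHull ℝ (x '' ↑(Finset.univ : Finset (Fin (d + 2)))) := by
    have : x '' ↑(Finset.univ : Finset (Fin (d + 2))) = S := by
      rw [Finset.coe_univ, Set.image_univ, hxrange]
    rw [this]
    exact interior_subset hScont
  obtain ⟨w', hw'0, -, hw'1, hw'z⟩ := (memConv Finset.univ).mp hzS'
  set Rep : (Fin (d + 2) → ℝ) → Prop :=
    fun w => (∀ i, 0 ≤ w i) ∧ ∑ i, w i = 1 ∧ ∑ i, w i • x i = z with hRep
  set N : Set ℕ :=
    {n | ∃ w, Rep w ∧ (Finset.univ.filter (fun i => w i ≠ 0)).card = n} with hN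
  have hNne : N.Nonempty := ⟨_, w', ⟨hw'0, hw'1, hw'z⟩, rfl⟩
  obtain ⟨w₀, hw₀rep, hw₀card⟩ := Nat.sInf_mem hNne
  have hmin : ∀ w, Rep w → sInf N ≤ (Finset.univ.filter (fun i => w i ≠ 0)).card :=
    fun w hw => Nat.sInf_le ⟨w, hw, rfl⟩
  set K : Finset (Fin (d + 2)) := Finset.univ.filter (fun i => w₀ i ≠ 0) with hK
  have hw₀K : ∀ i ∉ K, w₀ i = 0 := by
    intro i hi
    by_contra h
    exact hi (Finset.mem_filter.mpr ⟨Finset.mem_univ i, h⟩)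
  have hw₀posK : ∀ i ∈ K, 0 < w₀ i := by
    intro i hi
    exact (hw₀rep.1 i).lt_of_ne' (Finset.mem_filter.mp hi).2
  have hKconv : z ∈ convexHull ℝ (x '' ↑K) :=
    (memConv K).mpr ⟨w₀, hw₀rep.1, hw₀K, hw₀rep.2.1, hw₀rep.2.2⟩
  have hKge : d + 1 ≤ K.card := by
    by_contra h
    exact key0 K (by omega) hKconv
  -- the affine dependence α among all d+2 points
  obtain ⟨α, hαsum, hαcomb, iα, hαne⟩ :
      ∃ α : Fin (d + 2) → ℝ, ∑ i, α i = 0 ∧ ∑ i, α i • x i = 0 ∧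
        ∃ iα, α iα ≠ 0 := by
    have hnotind : ¬ AffineIndependent ℝ x := by
      intro h
      have h1 : Module.finrank ℝ (vectorSpan ℝ (Set.range x)) ≤ d := by
        have := Submodule.finrank_le (vectorSpan ℝ (Set.range x))
        rwa [finrank_euclideanSpace_fin] at this
      exact (affineIndependent_iff_not_finrank_vectorSpan_le ℝ x
        (by simp : Fintype.card (Fin (d + 2)) = d + 2)).mp h h1
    rw [affineIndependent_iff] at hnotind
    push_neg at hnotind
    obtain ⟨s, α', hs1, hs2, iα, hiαs, hiαne⟩ := hnotind
    refine ⟨fun i => if i ∈ s then α' i else 0, ?_, ?_, iα, by simp [hiαs, hiαne]⟩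
    · rw [Finset.sum_ite_mem, Finset.univ_inter]
      exact hs1
    · have : ∀ i, (if i ∈ s then α' i else 0) • x i = if i ∈ s then α' i • x i else 0 := by
        intro i; split <;> simp
      rw [Finset.sum_congr rfl (fun i _ => this i), Finset.sum_ite_mem, Finset.univ_inter]
      exact hs2
  -- the support has exactly d+1 elements
  have hKcard : K.card = d + 1 := by
    by_contra hKne
    have hKle : K.card ≤ d + 2 := by
      have := Finset.card_le_univ K
      simpa using this
    have hKeq : K = Finset.univ :=
      Finset.eq_univ_of_card K (by rw [Fintype.card_fin]; omega)
    have hw₀pos : ∀ i, 0 < w₀ i := fun i => hw₀posK i (hKeq ▸ Finset.mem_univ i)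
    -- use α to reduce the support
    have hPne : (Finset.univ.filter (fun i => 0 < α i)).Nonempty := by
      by_contra hP
      rw [Finset.not_nonempty_iff_eq_empty] at hP
      have hall : ∀ i ∈ Finset.univ, α i ≤ 0 := by
        intro i _
        by_contra h
        push_neg at h
        have hmem : i ∈ Finset.univ.filter (fun i => 0 < α i) :=
          Finset.mem_filter.mpr ⟨Finset.mem_univ i, h⟩
        rw [hP] at hmem
        exact Finset.notMem_empty i hmem
      have := (Finset.sum_eq_zero_iff_of_nonpos hall).mp hαsum
      exact hαne (this iα (Finset.mem_univ iα))
    obtain ⟨i₀, hi₀P, hi₀min⟩ :=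
      Finset.exists_min_image _ (fun i => w₀ i / α i) hPne
    have hαi₀ : 0 < α i₀ := (Finset.mem_filter.mp hi₀P).2
    set t := w₀ i₀ / α i₀ with htdef
    have ht0 : 0 < t := div_pos (hw₀pos i₀) hαi₀
    set w'' : Fin (d + 2) → ℝ := fun i => w₀ i - t * α i with hw''
    have h1 : ∑ i, w'' i = 1 := by
      rw [hw'']
      rw [Finset.sum_sub_distrib, ← Finset.mul_sum, hαsum, hw₀rep.2.1]
      ring
    have h2 : ∑ i, w'' i • x i = z := by
      rw [hw'']
      have : ∀ i, (w₀ i - t * α i) • x i = w₀ i • x i - t • (α i • x i) := by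
        intro i; rw [sub_smul, smul_smul]
      rw [Finset.sum_congr rfl (fun i _ => this i), Finset.sum_sub_distrib,
        ← Finset.smul_sum, hαcomb, hw₀rep.2.2, smul_zero, sub_zero]
    have h0 : ∀ i, 0 ≤ w'' i := by
      intro i
      rw [hw'']
      rcases le_or_gt (α i) 0 with h | h
      · have : t * α i ≤ 0 := mul_nonpos_of_nonneg_of_nonpos ht0.le h
        have := hw₀rep.1 i
        simp only
        linarith
      · have hle := hi₀min i (Finset.mem_filter.mpr ⟨Finset.mem_univ i, h⟩)
        have : t * α i ≤ w₀ i := by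
          rw [← le_div_iff₀ h]
          exact hle
        simp only
        linarith
    have hi₀0 : w'' i₀ = 0 := by
      rw [hw'']
      simp only
      rw [htdef]
      field_simp
      ring
    have hsub : Finset.univ.filter (fun i => w'' i ≠ 0) ⊆ Finset.univ.erase i₀ := by
      intro i hi
      refine Finset.mem_erase.mpr ⟨?_, Finset.mem_univ i⟩
      intro h
      exact (Finset.mem_filter.mp hi).2 (h ▸ hi₀0)
    have hcard'' : (Finset.univ.filter (fun i => w'' i ≠ 0)).card ≤ d + 1 := by
      have := Finset.card_le_card hsub
      rw [Finset.card_erase_of_mem (Finset.mem_univ i₀)] at this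
      simpa using this
    have := hmin w'' ⟨h0, h1, h2⟩
    omega
  -- k = the unique index outside the support
  obtain ⟨k, hKk⟩ : ∃ k, Kᶜ = {k} := by
    apply Finset.card_eq_one.mp
    rw [Finset.card_compl, hKcard]
    simp
  have hkK : k ∉ K := by
    have : k ∈ Kᶜ := hKk ▸ Finset.mem_singleton_self k
    simpa using this
  have hKmem : ∀ i, i ∈ K ↔ i ≠ k := by
    intro i
    constructor
    · intro hi h
      exact hkK (h ▸ hi)
    · intro hi
      by_contra h
      have : i ∈ Kᶜ := Finset.mem_compl.mpr h
      rw [hKk, Finset.mem_singleton] at this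
      exact hi this
  have hw₀k : w₀ k = 0 := hw₀K k hkK
  have hw₀pos : ∀ i, i ≠ k → 0 < w₀ i := fun i hi => hw₀posK i ((hKmem i).mpr hi)
  have hKerase : K = Finset.univ.erase k := by
    ext i
    rw [Finset.mem_erase, hKmem i]
    simp
  -- uniqueness of affine dependences
  have hindK : ∀ w : Fin (d + 2) → ℝ, ∑ i, w i = 0 → ∑ i, w i • x i = 0 → w k = 0 →
      ∀ i, w i = 0 := by
    intro w hsum hcomb hk0
    have hKind : AffineIndependent ℝ (fun i : ↥K => x ↑i) := by
      by_contra hni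
      have hle := (finrank_vectorSpan_le_iff_not_affineIndependent ℝ
        (fun i : ↥K => x ↑i) (n := d - 1) (by simp [hKcard]; omega)).mpr hni
      have hrangeK : Set.range (fun i : ↥K => x ↑i) = x '' ↑K :=
        (Set.image_eq_range x (↑K : Set (Fin (d + 2)))).symm
      rw [hrangeK] at hle
      exact hgen _ (himg K) (by omega) (convexHull_subset_affineSpan _ hKconv)
    rw [affineIndependent_iff] at hKind
    have hsumK : ∑ i ∈ K, w i = 0 := by
      have h : ∑ i ∈ Finset.univ.erase k, w i + w k = ∑ i, w i :=
        Finset.sum_erase_add Finset.univ w (Finset.mem_univ k)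
      rw [← hKerase, hk0, add_zero, hsum] at h
      exact h
    have hcombK : ∑ i ∈ K, w i • x i = 0 := by
      have h : ∑ i ∈ Finset.univ.erase k, w i • x i + w k • x k = ∑ i, w i • x i :=
        Finset.sum_erase_add Finset.univ (fun i => w i • x i) (Finset.mem_univ k)
      rw [← hKerase, hk0, zero_smul, add_zero, hcomb] at h
      exact h
    have hallK := hKind Finset.univ (fun i : ↥K => w ↑i)
      (by rw [Finset.sum_coe_sort K w]; exact hsumK)
      (by rw [Finset.sum_coe_sort K (fun i => w i • x i)]; exact hcombK)
    intro i
    by_cases hik : i = k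
    · rw [hik]; exact hk0
    · exact hallK ⟨i, (hKmem i).mpr hik⟩ (Finset.mem_univ _)
  -- normalize α so that α k > 0
  have hαk : α k ≠ 0 := by
    intro h
    exact hαne (hindK α hαsum hαcomb h iα)
  obtain ⟨a, hasum, hacomb, hak⟩ :
      ∃ a : Fin (d + 2) → ℝ, ∑ i, a i = 0 ∧ ∑ i, a i • x i = 0 ∧ 0 < a k := by
    rcases lt_or_gt_of_ne hαk with h | h
    · refine ⟨fun i => -α i, by rw [Finset.sum_neg_distrib, hαsum, neg_zero], ?_,
        by show 0 < -α k; linarith⟩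
      have : ∀ i, (-α i) • x i = -(α i • x i) := fun i => by rw [neg_smul]
      rw [Finset.sum_congr rfl (fun i _ => this i), Finset.sum_neg_distrib, hαcomb, neg_zero]
    · exact ⟨α, hαsum, hαcomb, h⟩
  -- the exit point of the segment
  have hNeg : (Finset.univ.filter (fun i => a i < 0)).Nonempty := by
    by_contra hP
    rw [Finset.not_nonempty_iff_eq_empty] at hP
    have hall : ∀ i ∈ Finset.univ, 0 ≤ a i := by
      intro i _
      by_contra h
      push_neg at h
      have hmem : i ∈ Finset.univ.filter (fun i => a i < 0) :=
        Finset.mem_filter.mpr ⟨Finset.mem_univ i, h⟩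
      rw [hP] at hmem
      exact Finset.notMem_empty i hmem
    have := (Finset.sum_eq_zero_iff_of_nonneg hall).mp hasum
    exact absurd (this k (Finset.mem_univ k)) (by linarith)
  obtain ⟨j, hjmem, hjmin⟩ :=
    Finset.exists_min_image _ (fun i => w₀ i / (-a i)) hNeg
  have haj : a j < 0 := (Finset.mem_filter.mp hjmem).2
  have hjk : j ≠ k := fun h => by rw [h] at haj; linarith
  set t' := w₀ j / (-a j) with ht'def
  have ht'0 : 0 ≤ t' := div_nonneg (hw₀rep.1 j) (by linarith)
  set w₁ : Fin (d + 2) → ℝ := fun i => w₀ i + t' * a i with hw₁def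
  have hw₁sum : ∑ i, w₁ i = 1 := by
    rw [hw₁def, Finset.sum_add_distrib, ← Finset.mul_sum, hasum, hw₀rep.2.1]
    ring
  have hw₁comb : ∑ i, w₁ i • x i = z := by
    rw [hw₁def]
    have : ∀ i, (w₀ i + t' * a i) • x i = w₀ i • x i + t' • (a i • x i) := by
      intro i; rw [add_smul, smul_smul]
    rw [Finset.sum_congr rfl (fun i _ => this i), Finset.sum_add_distrib,
      ← Finset.smul_sum, hacomb, hw₀rep.2.2, smul_zero, add_zero]
  have hw₁j : w₁ j = 0 := by
    have hajne : a j ≠ 0 := ne_of_lt haj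
    have h1 : t' * a j = -w₀ j := by
      rw [ht'def, div_mul_eq_mul_div, div_neg, mul_div_assoc, div_self hajne, mul_one]
    show w₀ j + t' * a j = 0
    linarith
  have hw₁0 : ∀ i, 0 ≤ w₁ i := by
    intro i
    rw [hw₁def]
    rcases le_or_gt 0 (a i) with h | h
    · have : 0 ≤ t' * a i := mul_nonneg ht'0 h
      have := hw₀rep.1 i
      simp only
      linarith
    · have hle := hjmin i (Finset.mem_filter.mpr ⟨Finset.mem_univ i, h⟩)
      have hia : 0 < -a i := by linarith
      have : t' * (-a i) ≤ w₀ i := by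
        rw [← le_div_iff₀ hia]
        exact hle
      simp only
      linarith
  have hw₁pos : ∀ i, i ≠ j → 0 < w₁ i := by
    intro i hij
    rcases (hw₁0 i).lt_or_eq with h | h
    · exact h
    exfalso
    have hzconv : z ∈ convexHull ℝ (x '' ↑((Finset.univ.erase i).erase j)) := by
      refine (memConv _).mpr ⟨w₁, hw₁0, ?_, hw₁sum, hw₁comb⟩
      intro l hl
      rcases eq_or_ne l j with rfl | hlj
      · exact hw₁j
      rcases eq_or_ne l i with rfl | hli
      · exact h.symm
      exact absurd (Finset.mem_erase.mpr ⟨hlj, Finset.mem_erase.mpr ⟨hli, Finset.mem_univ l⟩⟩) hl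
    refine key0 _ ?_ hzconv
    rw [Finset.card_erase_of_mem
      (Finset.mem_erase.mpr ⟨Ne.symm hij, Finset.mem_univ j⟩),
      Finset.card_erase_of_mem (Finset.mem_univ i)]
    simp
  -- descriptions of deleted-point sets
  have himgerase : ∀ i, x '' ↑(Finset.univ.erase i) = S \ {x i} := by
    intro i
    ext b
    constructor
    · rintro ⟨l, hl, rfl⟩
      have hli : l ≠ i := (Finset.mem_erase.mp (Finset.mem_coe.mp hl)).1
      exact ⟨hxS l, fun h => hli (hxinj h)⟩
    · rintro ⟨hbS, hbi⟩
      have : b ∈ Set.range x := hxrange.symm ▸ hbS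
      obtain ⟨l, rfl⟩ := this
      refine ⟨l, Finset.mem_coe.mpr (Finset.mem_erase.mpr ⟨?_, Finset.mem_univ l⟩), rfl⟩
      intro h
      exact hbi (by rw [h]; exact Set.mem_singleton _)
  have hTk : z ∈ interior (convexHull ℝ (S \ {x k})) := by
    rw [← himgerase]
    refine contain _ w₀ ?_ ?_ ?_ hw₀rep.2.1 hw₀rep.2.2
    · rw [Finset.card_erase_of_mem (Finset.mem_univ k)]
      simp
    · intro i hi
      exact hw₀pos i (Finset.mem_erase.mp hi).1
    · intro i hi
      have : i = k := by
        by_contra h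
        exact hi (Finset.mem_erase.mpr ⟨h, Finset.mem_univ i⟩)
      rw [this]
      exact hw₀k
  have hTj : z ∈ interior (convexHull ℝ (S \ {x j})) := by
    rw [← himgerase]
    refine contain _ w₁ ?_ ?_ ?_ hw₁sum hw₁comb
    · rw [Finset.card_erase_of_mem (Finset.mem_univ j)]
      simp
    · intro i hi
      exact hw₁pos i (Finset.mem_erase.mp hi).1
    · intro i hi
      have : i = j := by
        by_contra h
        exact hi (Finset.mem_erase.mpr ⟨h, Finset.mem_univ i⟩)
      rw [this]
      exact hw₁j
  -- classification of containing subsets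
  have hclass : ∀ X, X ⊆ S → IsZContaining d z X →
      X = S ∨ X = S \ {x j} ∨ X = S \ {x k} := by
    intro X hXS hXc
    set I : Finset (Fin (d + 2)) := Finset.univ.filter (fun i => x i ∈ X) with hIdef
    have hXI : X = x '' ↑I := by
      ext b
      constructor
      · intro hb
        have : b ∈ Set.range x := hxrange.symm ▸ hXS hb
        obtain ⟨l, rfl⟩ := this
        exact ⟨l, Finset.mem_coe.mpr (Finset.mem_filter.mpr ⟨Finset.mem_univ l, hb⟩), rfl⟩
      · rintro ⟨l, hl, rfl⟩
        exact (Finset.mem_filter.mp (Finset.mem_coe.mp hl)).2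
    have hzX : z ∈ convexHull ℝ (x '' ↑I) := by
      rw [← hXI]
      exact interior_subset hXc
    have hIge : d + 1 ≤ I.card := by
      by_contra h
      exact key0 I (by omega) hzX
    have hIle : I.card ≤ d + 2 := by
      simpa using Finset.card_le_univ I
    rcases eq_or_lt_of_le hIge with hI1 | hI2
    · -- |I| = d+1 : the complement is a single index i
      obtain ⟨i, hIc⟩ : ∃ i, Iᶜ = {i} := by
        apply Finset.card_eq_one.mp
        rw [Finset.card_compl, ← hI1]
        simp
      have hIerase : I = Finset.univ.erase i := by
        ext l
        rw [Finset.mem_erase]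
        constructor
        · intro hl
          refine ⟨?_, Finset.mem_univ l⟩
          intro h
          have : l ∈ Iᶜ := by
            rw [hIc]
            exact Finset.mem_singleton.mpr h
          exact (Finset.mem_compl.mp this) hl
        · rintro ⟨hl, -⟩
          by_contra h
          have : l ∈ Iᶜ := Finset.mem_compl.mpr h
          rw [hIc, Finset.mem_singleton] at this
          exact hl this
      obtain ⟨w, hw0, hwI, hw1, hwz⟩ := (memConv I).mp hzX
      set t := w k / a k with htdef
      have ht0 : 0 ≤ t := div_nonneg (hw0 k) hak.le
      have hδsum : ∑ l, (w l - w₀ l - t * a l) = 0 := by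
        rw [Finset.sum_sub_distrib, Finset.sum_sub_distrib, ← Finset.mul_sum,
          hasum, hw1, hw₀rep.2.1]
        ring
      have hδcomb : ∑ l, (w l - w₀ l - t * a l) • x l = 0 := by
        have hexp : ∀ l, (w l - w₀ l - t * a l) • x l
            = w l • x l - w₀ l • x l - t • (a l • x l) := by
          intro l
          rw [sub_smul, sub_smul, smul_smul]
        rw [Finset.sum_congr rfl (fun l _ => hexp l), Finset.sum_sub_distrib,
          Finset.sum_sub_distrib, ← Finset.smul_sum, hacomb, smul_zero,
          hwz, hw₀rep.2.2]
        simp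
      have hδk : w k - w₀ k - t * a k = 0 := by
        rw [hw₀k, htdef, div_mul_cancel₀ (w k) (ne_of_gt hak)]
        ring
      have hδ := hindK _ hδsum hδcomb hδk
      have hteq : ∀ l, w l = w₀ l + t * a l := by
        intro l
        have h := hδ l
        change w l - w₀ l - t * a l = 0 at h
        linarith
      by_cases hik : i = k
      · right; right
        rw [hXI, hIerase, hik, himgerase]
      by_cases hij : i = j
      · right; left
        rw [hXI, hIerase, hij, himgerase]
      exfalso
      have hwi : w i = 0 := hwI i (by rw [hIerase]; simp)
      have hw₀i : 0 < w₀ i := hw₀pos i hik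
      have hti : w₀ i + t * a i = 0 := by
        rw [← hteq i]
        exact hwi
      have hai : a i < 0 := by
        by_contra h
        push_neg at h
        have := mul_nonneg ht0 h
        linarith
      have htpos : 0 < t := by
        rcases ht0.lt_or_eq with h | h
        · exact h
        · exfalso
          rw [← h] at hti
          simp at hti
          linarith
      have heq : w₀ i / (-a i) = t := by
        rw [eq_comm, eq_div_iff (by linarith : (-a i) ≠ 0)]
        have hr : t * -a i = -(t * a i) := by ring
        rw [hr]
        linarith
      have hge : t' ≤ t := by
        have hle := hjmin i (Finset.mem_filter.mpr ⟨Finset.mem_univ i, hai⟩)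
        rw [heq] at hle
        exact hle
      have hwj : w j = 0 := by
        have h1 := hteq j
        have h2 : t * a j ≤ t' * a j := mul_le_mul_of_nonpos_right hge (le_of_lt haj)
        have h3 : w₀ j + t' * a j = 0 := hw₁j
        have h4 := hw0 j
        linarith
      have hzsmall : z ∈ convexHull ℝ (x '' ↑((Finset.univ.erase i).erase j)) := by
        refine (memConv _).mpr ⟨w, hw0, ?_, hw1, hwz⟩
        intro l hl
        rcases eq_or_ne l j with rfl | hlj
        · exact hwj
        rcases eq_or_ne l i with rfl | hli
        · exact hwi
        exact absurd (Finset.mem_erase.mpr ⟨hlj,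
          Finset.mem_erase.mpr ⟨hli, Finset.mem_univ l⟩⟩) hl
      refine key0 _ ?_ hzsmall
      rw [Finset.card_erase_of_mem
        (Finset.mem_erase.mpr ⟨Ne.symm hij, Finset.mem_univ j⟩),
        Finset.card_erase_of_mem (Finset.mem_univ i)]
      simp
    · -- |I| = d+2 : X = S
      left
      have : I = Finset.univ := Finset.eq_univ_of_card I (by rw [Fintype.card_fin]; omega)
      rw [hXI, this, Finset.coe_univ, Set.image_univ, hxrange]
  exact ⟨x j, x k, hxS j, hxS k, fun h => hjk (hxinj h), hTj, hTk, hclass⟩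


section Downstream
set_option linter.unusedSectionVars false

variable (d : ℕ) (S : Set (Pt d)) (hS : S.Finite) (z : Pt d)
  (hScont : IsZContaining d z S) (hcard : S.ncard = d + 2)
  (p q : Pt d) (hp : p ∈ S) (hq : q ∈ S) (hpq : p ≠ q)
  (hCp : IsZContaining d z (S \ {p})) (hCq : IsZContaining d z (S \ {q}))
  (hclass : ∀ X, X ⊆ S → IsZContaining d z X → X = S ∨ X = S \ {p} ∨ X = S \ {q})

include hS hcard hp hq hpq hCp hCq hclass hScont

lemma aux_min : MinContaining d z S = {S \ {p}, S \ {q}} := by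
  have hnp : (S \ {p}).ncard = d + 1 := by
    rw [Set.ncard_diff_singleton_of_mem hp, hcard]; omega
  have hnq : (S \ {q}).ncard = d + 1 := by
    rw [Set.ncard_diff_singleton_of_mem hq, hcard]; omega
  have hmin : ∀ r ∈ S, (S \ {r}).ncard = d + 1 → IsZContaining d z (S \ {r}) →
      S \ {r} ∈ MinContaining d z S := by
    intro r hr hnr hcr
    refine ⟨Set.diff_subset, hcr, ?_⟩
    intro Y hY hYc
    have hYS : Y ⊆ S := hY.subset.trans Set.diff_subset
    have hYcard : Y.ncard < d + 1 := by
      rw [← hnr]; exact Set.ncard_lt_ncard hY hS.diff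
    rcases hclass Y hYS hYc with h | h | h
    · rw [h, hcard] at hYcard; omega
    · rw [h, hnp] at hYcard; omega
    · rw [h, hnq] at hYcard; omega
  apply Set.eq_of_subset_of_subset
  · rintro X ⟨hXS, hXc, hXmin⟩
    rcases hclass X hXS hXc with h | h | h
    · exfalso
      refine hXmin (S \ {p}) ?_ hCp
      rw [h]
      exact ⟨Set.diff_subset, fun hcon => (hcon hp).2 rfl⟩
    · left; exact h
    · right; exact h
  · rintro X (rfl | rfl)
    · exact hmin p hp hnp hCp
    · exact hmin q hq hnq hCq

lemma aux_min_card : (MinContaining d z S).ncard = 2 := by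
  rw [aux_min d S hS z hScont hcard p q hp hq hpq hCp hCq hclass]
  apply Set.ncard_pair
  intro hcon
  have : q ∈ S \ {p} := ⟨hq, fun h => hpq h.symm⟩
  rw [hcon] at this
  exact this.2 rfl

lemma aux_max : MaxAvoiding d z S =
    ((fun s => S \ {s}) '' (S \ {p, q})) ∪ {S \ {p, q}} := by
  have hnS : S.ncard = d + 2 := hcard
  have hnp : (S \ {p}).ncard = d + 1 := by
    rw [Set.ncard_diff_singleton_of_mem hp, hcard]; omega
  have hnq : (S \ {q}).ncard = d + 1 := by
    rw [Set.ncard_diff_singleton_of_mem hq, hcard]; omega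
  have hpqS : ({p, q} : Set (Pt d)) ⊆ S := by
    rintro r (rfl | rfl); exact hp; exact hq
  have hA0 : (S \ {p, q}).ncard = d := by
    rw [Set.ncard_diff hpqS, Set.ncard_pair hpq, hcard]; omega
  -- avoidance from the classification
  have havd : ∀ X, X ⊆ S → X ≠ S → X ≠ S \ {p} → X ≠ S \ {q} → IsZAvoiding d z X := by
    intro X hXS h1 h2 h3 hcon
    rcases hclass X hXS hcon with h | h | h
    · exact h1 h
    · exact h2 h
    · exact h3 h
  -- a deleted-point set S \ {t} for t ∈ S, t ∉ {p,q} is avoiding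
  have hdel : ∀ t ∈ S, t ≠ p → t ≠ q → IsZAvoiding d z (S \ {t}) := by
    intro t ht htp htq
    have hne : ∀ r ∈ S, S \ {t} = S \ {r} → t = r := by
      intro r hr hEq
      by_contra hc
      have : t ∈ S \ {r} := ⟨ht, hc⟩
      rw [← hEq] at this
      exact this.2 rfl
    refine havd _ Set.diff_subset ?_ ?_ ?_
    · intro h
      have : t ∈ S \ {t} := by rw [h]; exact ht
      exact this.2 rfl
    · exact fun h => htp (hne p hp h)
    · exact fun h => htq (hne q hq h)
  have hA0avd : IsZAvoiding d z (S \ {p, q}) := by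
    refine havd _ Set.diff_subset ?_ ?_ ?_ <;> intro h
    · rw [h] at hA0; omega
    · rw [h, hnp] at hA0; omega
    · rw [h, hnq] at hA0; omega
  apply Set.eq_of_subset_of_subset
  · rintro X ⟨hXS, hXa, hXmax⟩
    have hXne : X ≠ S := by
      intro h; rw [h] at hXa; exact hXa hScont
    by_cases hsub : X ⊆ S \ {p, q}
    · right
      rcases eq_or_ne X (S \ {p, q}) with h | h
      · exact h
      · exact absurd hA0avd (hXmax _ (Set.diff_subset) ⟨hsub, fun hc => h (hsub.antisymm hc)⟩)
    · -- X contains p or q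
      obtain ⟨s, hsX, hsA⟩ := Set.not_subset.mp (fun h => hsub h)
      have hspq : s = p ∨ s = q := by
        by_contra hc
        push_neg at hc
        exact hsA ⟨hXS hsX, by rintro (rfl | rfl); exact hc.1 rfl; exact hc.2 rfl⟩
      by_cases hT : ∃ t ∈ S \ X, t ≠ p ∧ t ≠ q
      · obtain ⟨t, htSX, htp, htq⟩ := hT
        have hXt : X ⊆ S \ {t} := fun a ha => ⟨hXS ha, fun h => htSX.2 (h ▸ ha)⟩
        rcases eq_or_ne X (S \ {t}) with h | h
        · left
          exact ⟨t, ⟨htSX.1, by rintro (rfl | rfl); exact htp rfl; exact htq rfl⟩, h.symm⟩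
        · exact absurd (hdel t htSX.1 htp htq)
            (hXmax _ Set.diff_subset ⟨hXt, fun hc => h (hXt.antisymm hc)⟩)
      · exfalso
        have hT' : ∀ t ∈ S \ X, t = p ∨ t = q := by
          intro t ht
          by_contra hc
          push_neg at hc
          exact hT ⟨t, ht, hc.1, hc.2⟩
        have hkey : ∀ u v : Pt d, v ∈ X → ({v, u} : Set (Pt d)) = {p, q} →
            IsZContaining d z (S \ {u}) → False := by
          intro u v hvX hvu hcont
          by_cases huX : u ∈ X
          · -- then S \ X = ∅, X = S
            apply hXne
            apply hXS.antisymm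
            intro a haS
            by_contra hc
            have hor : a = p ∨ a = q := hT' a ⟨haS, hc⟩
            have : a = v ∨ a = u := by
              have h1 : a ∈ ({p, q} : Set (Pt d)) := by
                rcases hor with rfl | rfl
                · exact Or.inl rfl
                · exact Or.inr rfl
              rw [← hvu] at h1
              exact h1
            rcases this with rfl | rfl
            · exact hc hvX
            · exact hc huX
          · have hXu : X = S \ {u} := by
              apply Set.Subset.antisymm
              · exact fun a ha => ⟨hXS ha, fun h => huX (h ▸ ha)⟩
              · rintro a ⟨haS, hau⟩
                by_contra hc
                have hor : a = p ∨ a = q := hT' a ⟨haS, hc⟩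
                have : a = v ∨ a = u := by
                  have h1 : a ∈ ({p, q} : Set (Pt d)) := by
                    rcases hor with rfl | rfl
                    · exact Or.inl rfl
                    · exact Or.inr rfl
                  rw [← hvu] at h1
                  exact h1
                rcases this with rfl | rfl
                · exact hc hvX
                · exact hau rfl
            rw [hXu] at hXa
            exact hXa hcont
        rcases hspq with rfl | rfl
        · exact hkey q s hsX rfl hCq
        · exact hkey p s hsX (Set.pair_comm _ _) hCp
  · rintro X (⟨t, htA, rfl⟩ | rfl)
    · have htS : t ∈ S := htA.1
      have htp : t ≠ p := fun h => htA.2 (Or.inl h)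
      have htq : t ≠ q := fun h => htA.2 (Or.inr h)
      refine ⟨Set.diff_subset, hdel t htS htp htq, ?_⟩
      intro B hBS hB hBa
      have hBeq : B = S := by
        apply hBS.antisymm
        intro a haS
        by_cases hat : a = t
        · obtain ⟨b, hbB, hbX⟩ := Set.exists_of_ssubset hB
          have : b = t := by
            by_contra hc
            exact hbX ⟨hBS hbB, hc⟩
          rw [hat, ← this]; exact hbB
        · exact hB.subset ⟨haS, hat⟩
      rw [hBeq] at hBa
      exact hBa hScont
    · refine ⟨Set.diff_subset, hA0avd, ?_⟩
      intro B hBS hB hBa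
      obtain ⟨b, hbB, hbX⟩ := Set.exists_of_ssubset hB
      have hbpq : b = p ∨ b = q := by
        by_contra hc
        push_neg at hc
        exact hbX ⟨hBS hbB, by rintro (rfl | rfl); exact hc.1 rfl; exact hc.2 rfl⟩
      have hsub : ∀ u v : Pt d, ({u, v} : Set (Pt d)) = {p, q} → v ∈ B →
          IsZContaining d z (S \ {u}) → False := by
        intro u v huv hvB hcont
        have : S \ {u} ⊆ B := by
          intro a ⟨haS, hau⟩
          by_cases hav : a = v
          · exact hav ▸ hvB
          · refine hB.subset ⟨haS, ?_⟩
            rw [← huv]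
            rintro (h | h); exact hau h; exact hav h
        exact hBa (interior_mono (convexHull_mono this) hcont)
      rcases hbpq with rfl | rfl
      · exact (hsub q b (by rw [Set.pair_comm]) hbB hCq).elim
      · exact (hsub p b rfl hbB hCp).elim

lemma aux_max_card : (MaxAvoiding d z S).ncard = d + 1 := by
  rw [aux_max d S hS z hScont hcard p q hp hq hpq hCp hCq hclass]
  have hpqS : ({p, q} : Set (Pt d)) ⊆ S := by
    rintro r (rfl | rfl); exact hp; exact hq
  have hA0 : (S \ {p, q}).ncard = d := by
    rw [Set.ncard_diff hpqS, Set.ncard_pair hpq, hcard]; omega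
  have hfin : (S \ {p, q}).Finite := hS.diff
  have hinj : Set.InjOn (fun s => S \ {s}) (S \ {p, q}) := by
    intro a ha b hb hEq
    simp only at hEq
    by_contra hc
    have : a ∈ S \ {b} := ⟨ha.1, hc⟩
    rw [← hEq] at this
    exact this.2 rfl
  have himg : ((fun s => S \ {s}) '' (S \ {p, q})).ncard = d := by
    rw [Set.ncard_image_of_injOn hinj, hA0]
  have hnotin : (S \ {p, q}) ∉ ((fun s => S \ {s}) '' (S \ {p, q})) := by
    rintro ⟨t, htA, hEq⟩
    simp only at hEq
    have h1 : (S \ {t}).ncard = d + 1 := by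
      rw [Set.ncard_diff_singleton_of_mem htA.1, hcard]; omega
    rw [hEq, hA0] at h1; omega
  rw [Set.ncard_union_eq (by simpa using hnotin) (hfin.image _) (Set.finite_singleton _),
    himg, Set.ncard_singleton]

end Downstream


theorem maxAvoiding_card_eq_of_card_eq_d_add_two
    (d : ℕ) (S : Set (Pt d)) (hS : S.Finite) (z : Pt d) (hzS : z ∉ S)
    (hgen : GenPos d z S) (hScont : IsZContaining d z S) (hcard : S.ncard = d + 2) :
    ((MaxAvoiding d z S).ncard : ℤ) = d * (MinContaining d z S).ncard - d + 1 := by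
  obtain ⟨p, q, hp, hq, hpq, hCp, hCq, hclass⟩ := setup d S hS z hgen hScont hcard
  rw [aux_min_card d S hS z hScont hcard p q hp hq hpq hCp hCq hclass,
    aux_max_card d S hS z hScont hcard p q hp hq hpq hCp hCq hclass]
  push_cast
  ring
end

section
/- Let S be a finite set of points in ℝ^d, let z lie in the interior of the convex hull conv(S), and suppose z is in general position with respect to S. Then there exists X ⊆ S such that X is affinely independent, |X| = d + 1 (so conv(X) is a d-dimensional simplex), and z lies in the interior of conv(X). -/
theorem exists_simplex_containing_z
    (d : ℕ) (S : Set (Pt d)) (hS : S.Finite) (z : Pt d)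
    (hz : z ∈ interior (convexHull ℝ S)) (hgen : GenPos d z S) :
    ∃ X ⊆ S, AffineIndependent ℝ ((↑) : X → Pt d) ∧ X.ncard = d + 1 ∧
      z ∈ interior (convexHull ℝ X) := by
  classical
  have hzS : z ∈ convexHull ℝ S := interior_subset hz
  rw [convexHull_eq_union] at hzS
  simp only [Set.mem_iUnion] at hzS
  obtain ⟨t, hts, hai, hzt⟩ := hzS
  have hzsp : z ∈ affineSpan ℝ (↑t : Set (Pt d)) := convexHull_subset_affineSpan _ hzt
  have hrk : ¬ Module.finrank ℝ (vectorSpan ℝ (↑t : Set (Pt d))) < d :=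
    fun h => hgen ↑t hts h hzsp
  have hd : Module.finrank ℝ (Pt d) = d := finrank_euclideanSpace_fin
  have hle : Module.finrank ℝ (vectorSpan ℝ (↑t : Set (Pt d))) ≤ d := by
    have h0 := Submodule.finrank_le (vectorSpan ℝ (↑t : Set (Pt d)))
    rwa [hd] at h0
  have hrk' : Module.finrank ℝ (vectorSpan ℝ (↑t : Set (Pt d))) = d :=
    le_antisymm hle (not_lt.1 hrk)
  have htne : t.Nonempty := by
    rcases t.eq_empty_or_nonempty with h | h
    · subst h; simp at hzt
    · exact h
  have h1 : 1 ≤ t.card := Finset.card_pos.2 htne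
  have hst : Set.range (Subtype.val : {x // x ∈ t} → Pt d) = (↑t : Set (Pt d)) := by
    ext x; simp
  have hcard : t.card = d + 1 := by
    have h2 := hai.finrank_vectorSpan (n := t.card - 1)
      (by simp only [Fintype.card_coe]; omega)
    rw [hst] at h2
    omega
  have htop : affineSpan ℝ (Set.range ((↑) : ↑t → Pt d)) = ⊤ :=
    hai.affineSpan_eq_top_iff_card_eq_finrank_add_one.2
      (by simp only [Fintype.card_coe, hd]; omega)
  let b : AffineBasis ↑t ℝ (Pt d) := ⟨(↑), hai, htop⟩
  have hbcoe : (b : ↑t → Pt d) = ((↑) : ↑t → Pt d) := rfl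
  have hrange : Set.range (b : ↑t → Pt d) = ↑t := by rw [hbcoe, hst]
  have hnn : ∀ i, 0 ≤ b.coord i z := by
    have h3 := b.convexHull_eq_nonneg_coord
    rw [hrange] at h3
    rw [h3] at hzt
    exact hzt
  have hpos : ∀ i, 0 < b.coord i z := by
    intro i
    rcases (hnn i).lt_or_eq with h | h
    · exact h
    exfalso
    have hw0 : b.coord i z = 0 := h.symm
    set w : ↑t → ℝ := fun j => b.coord j z with hw
    have hwi : w i = 0 := hw0
    have hsum : ∑ j, w j = 1 := b.sum_coord_apply_eq_one z
    have hcomb : Finset.univ.affineCombination ℝ (b : ↑t → Pt d) w = z :=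
      b.affineCombination_coord_eq_self z
    obtain ⟨j, -, hj⟩ := Finset.exists_ne_zero_of_sum_ne_zero (by rw [hsum]; norm_num :
      ∑ j : ↑t, w j ≠ 0)
    have hji : j ≠ i := fun hji => hj (by rw [hji]; exact hwi)
    have hd1 : 1 ≤ d := by
      have : 1 < t.card := Finset.one_lt_card.2
        ⟨↑j, j.2, ↑i, i.2, fun hc => hji (Subtype.ext hc)⟩
      omega
    set Y : Finset (Pt d) := t.erase ↑i with hY
    have hYS : (↑Y : Set (Pt d)) ⊆ S := fun x hx => hts (Finset.erase_subset _ _ hx)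
    have hYcard : Y.card = d := by rw [hY, Finset.card_erase_of_mem i.2]; omega
    have hYset : Set.range (Subtype.val : {y // y ∈ Y} → Pt d) = (↑Y : Set (Pt d)) := by
      ext x; simp
    have hYrk : Module.finrank ℝ (vectorSpan ℝ (↑Y : Set (Pt d))) < d := by
      have h4 := finrank_vectorSpan_range_le ℝ (Subtype.val : {y // y ∈ Y} → Pt d)
        (n := d - 1) (by simp only [Fintype.card_coe]; omega)
      rw [hYset] at h4
      omega
    let e : {y // y ∈ Y} ↪ ↑t :=
      ⟨fun y => ⟨↑y, Finset.mem_of_mem_erase y.2⟩, fun a b hab => Subtype.ext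
        (by have h := congrArg (Subtype.val : ↑t → Pt d) hab; exact h)⟩
    have hmap : (Finset.univ.map e) = Finset.univ.erase i := by
      ext j'
      simp only [Finset.mem_map, Finset.mem_univ, true_and, Finset.mem_erase, and_true]
      constructor
      · rintro ⟨y, rfl⟩
        intro hc
        exact (Finset.mem_erase.1 y.2).1 (congrArg Subtype.val hc)
      · intro hne
        exact ⟨⟨↑j', Finset.mem_erase.2 ⟨fun hc => hne (Subtype.ext hc), j'.2⟩⟩,
          Subtype.ext rfl⟩
    have hind : (↑(Finset.univ.erase i) : Set ↑t).indicator w = w := by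
      funext j'
      by_cases hji' : j' = i
      · subst hji'
        simp [Set.indicator_apply, hwi]
      · simp [Set.indicator_apply, hji']
    have hz2' : (Finset.univ.erase i).affineCombination ℝ (b : ↑t → Pt d) w = z := by
      rw [Finset.affineCombination_indicator_subset w (b : ↑t → Pt d)
        (Finset.erase_subset i Finset.univ), hind, hcomb]
    have hz2 : Finset.univ.affineCombination ℝ ((b : ↑t → Pt d) ∘ e) (w ∘ e) = z := by
      rw [← Finset.affineCombination_map, hmap, hz2']
    have hsum2 : ∑ y : {y // y ∈ Y}, (w ∘ e) y = 1 := by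
      have h5 : ∑ j' ∈ Finset.univ.map e, w j' = ∑ y : {y // y ∈ Y}, (w ∘ e) y :=
        Finset.sum_map _ _ _
      rw [hmap] at h5
      rw [← h5, Finset.sum_erase_eq_sub (Finset.mem_univ i), hsum, hwi, sub_zero]
    have hzY : z ∈ affineSpan ℝ (↑Y : Set (Pt d)) := by
      have h6 := affineCombination_mem_affineSpan hsum2 ((b : ↑t → Pt d) ∘ e)
      rw [hz2] at h6
      have h7 : Set.range ((b : ↑t → Pt d) ∘ e) = (↑Y : Set (Pt d)) := by
        rw [hbcoe]
        have h8 : ((↑) : ↑t → Pt d) ∘ e = (Subtype.val : {y // y ∈ Y} → Pt d) := rfl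
        rw [h8, hYset]
      rwa [h7] at h6
    exact hgen ↑Y hYS hYrk hzY
  refine ⟨↑t, hts, hai, by simp [Set.ncard_coe_finset, hcard], ?_⟩
  have h8 := b.interior_convexHull
  rw [hrange] at h8
  rw [h8]
  exact hpos
end

section
/- Let S be a finite set of points in ℝ^d and let z be in general position with respect to S. If C is a minimal z-containing subset of S, then C is affinely independent and |C| = d + 1, i.e. conv(C) is a d-dimensional simplex. -/
theorem minContaining_is_simplex
    (d : ℕ) (S : Set (Pt d)) (hS : S.Finite) (z : Pt d) (hgen : GenPos d z S)
    (C : Set (Pt d)) (hC : C ∈ MinContaining d z S) :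
    AffineIndependent ℝ ((↑) : C → Pt d) ∧ C.ncard = d + 1 := by
  classical
  obtain ⟨hCS, hzC, hmin⟩ := hC
  have hzconv : z ∈ convexHull ℝ C := interior_subset hzC
  rw [convexHull_eq_union] at hzconv
  simp only [Set.mem_iUnion] at hzconv
  obtain ⟨t, hts, hai, hzt⟩ := hzconv
  have htS : (↑t : Set (Pt d)) ⊆ S := hts.trans hCS
  -- the affine span of t is everything
  have hspan : affineSpan ℝ (↑t : Set (Pt d)) = ⊤ := by
    by_contra h
    have htne : (↑t : Set (Pt d)).Nonempty := by
      rcases t.eq_empty_or_nonempty with rfl | hne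
      · simp at hzt
      · exact Finset.coe_nonempty.mpr hne
    have hvs : vectorSpan ℝ (↑t : Set (Pt d)) ≠ ⊤ := by
      intro hv
      exact h ((AffineSubspace.affineSpan_eq_top_iff_vectorSpan_eq_top_of_nonempty ℝ _ _ htne).mpr hv)
    have hlt : Module.finrank ℝ (vectorSpan ℝ (↑t : Set (Pt d))) < d := by
      have := Submodule.finrank_lt (K := ℝ) (V := Pt d) hvs
      simpa [finrank_euclideanSpace] using this
    exact hgen _ htS hlt (convexHull_subset_affineSpan _ hzt)
  have hspan' : affineSpan ℝ (Set.range ((↑) : ↥t → Pt d)) = ⊤ := by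
    rwa [Subtype.range_coe]
  -- build the affine basis
  let b : AffineBasis ↥t ℝ (Pt d) := ⟨((↑) : ↥t → Pt d), hai, hspan'⟩
  have hb : Set.range b = (↑t : Set (Pt d)) := Subtype.range_coe
  have hcard : t.card = d + 1 := by
    have := (hai.affineSpan_eq_top_iff_card_eq_finrank_add_one).mp hspan'
    simpa [finrank_euclideanSpace] using this
  -- coordinates of z are nonnegative
  have hnonneg : ∀ i, 0 ≤ b.coord i z := by
    have : z ∈ convexHull ℝ (Set.range b) := by rwa [hb]
    rwa [b.convexHull_eq_nonneg_coord] at this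
  -- coordinates of z are positive
  have hpos : ∀ i, 0 < b.coord i z := by
    intro i
    rcases (hnonneg i).lt_or_eq with h | h
    · exact h
    exfalso
    -- z lies in the affine span of the other points, contradicting general position
    have hzcomb : (Finset.univ.affineCombination ℝ b fun j => b.coord j z) = z :=
      b.affineCombination_coord_eq_self z
    set w : ↥t → ℝ := fun j => b.coord j z with hw
    have hsum : ∑ j, w j = 1 := b.sum_coord_apply_eq_one z
    have hwi : w i = 0 := h.symm
    have hsum' : ∑ j ∈ Finset.univ.erase i, w j = 1 := by
      rw [← hsum]
      exact (Finset.sum_erase _ hwi)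
    have hind : Set.indicator (↑(Finset.univ.erase i)) w = w := by
      funext j
      by_cases hj : j = i
      · subst hj; simp [hwi, Set.indicator_apply]
      · simp [Set.indicator_apply, hj]
    have hzcomb' : ((Finset.univ.erase i).affineCombination ℝ b w) = z := by
      rw [Finset.affineCombination_indicator_subset w b (Finset.subset_univ _), hind, hzcomb]
    -- express the erase as a map of a subtype
    have hmap : (Finset.univ : Finset {j : ↥t // j ≠ i}).map (Function.Embedding.subtype _)
        = Finset.univ.erase i := by
      ext j
      simp [Finset.mem_map]
    set e : {j : ↥t // j ≠ i} ↪ ↥t := Function.Embedding.subtype _ with he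
    have hzcomb'' : ((Finset.univ : Finset {j : ↥t // j ≠ i}).affineCombination ℝ
        (⇑b ∘ ⇑e) (w ∘ ⇑e)) = z := by
      rw [← Finset.affineCombination_map, hmap, hzcomb']
    have hsum'' : ∑ j : {j : ↥t // j ≠ i}, (w ∘ ⇑e) j = 1 := by
      rw [← hsum', ← hmap, Finset.sum_map]
      rfl
    have hzmem : z ∈ affineSpan ℝ (Set.range (⇑b ∘ ⇑e)) := by
      rw [← hzcomb'']
      exact affineCombination_mem_affineSpan hsum'' _
    set X : Set (Pt d) := Set.range (⇑b ∘ ⇑e) with hX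
    have hXS : X ⊆ S := by
      rintro x ⟨j, rfl⟩
      exact htS (Finset.mem_coe.mpr (e j).2)
    -- cardinality of the subtype
    have hd : 1 ≤ d := by
      obtain ⟨j, hj⟩ := Finset.nonempty_of_sum_ne_zero (hsum'.symm ▸ (one_ne_zero (α := ℝ)))
      have h2 : 1 < Fintype.card ↥t :=
        Fintype.one_lt_card_iff.mpr ⟨j, i, (Finset.mem_erase.mp hj).1⟩
      rw [Fintype.card_coe, hcard] at h2
      omega
    have hcard' : Fintype.card {j : ↥t // j ≠ i} = (d - 1) + 1 := by
      have h1 : Fintype.card {j : ↥t // j ≠ i} = Fintype.card ↥t - 1 := by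
        simp [Fintype.card_subtype_compl]
      rw [h1, Fintype.card_coe, hcard]
      omega
    have hlt : Module.finrank ℝ (vectorSpan ℝ X) < d := by
      have h2 := finrank_vectorSpan_range_le ℝ (⇑b ∘ ⇑e) hcard'
      rw [← hX] at h2
      omega
    exact hgen X hXS hlt hzmem
  -- so z is in the interior of the convex hull of t
  have hint : IsZContaining d z (↑t : Set (Pt d)) := by
    unfold IsZContaining
    rw [← hb, b.interior_convexHull]
    exact hpos
  -- minimality forces C = t
  have hCt : (↑t : Set (Pt d)) = C := by
    by_contra hne
    exact hmin _ (ssubset_of_subset_of_ne hts hne) hint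
  subst hCt
  refine ⟨?_, ?_⟩
  · exact hai
  · rw [Set.ncard_coe_finset, hcard]
end

section
/- Let S be a finite set of points in ℝ^d, z ∈ ℝ^d \ S, and s ∈ S. Then |A(S)| = |A(S \ {s})| + |A_s(S)|, where A_s(S) = {X ∈ A(S) : s ∈ X and X \ {s} is not a maximal z-avoiding subset of S \ {s}}. -/
/-- `𝒜_s(S)`: members `X` of `𝒜(S)` with `s ∈ X` such that `X \ {s}` is not a maximal
`z`-avoiding subset of `S \ {s}`. -/
def MaxAvoidingNew (d : ℕ) (z : Pt d) (S : Set (Pt d)) (s : Pt d) : Set (Set (Pt d)) :=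
  {X ∈ MaxAvoiding d z S | s ∈ X ∧ X \ {s} ∉ MaxAvoiding d z (S \ {s})}


lemma avoiding_mono {d : ℕ} {z : Pt d} {X Y : Set (Pt d)} (h : X ⊆ Y)
    (hY : IsZAvoiding d z Y) : IsZAvoiding d z X := fun hx =>
  hY (interior_mono (convexHull_mono h) hx)

/-- Any avoiding subset of a finite set extends to a maximal avoiding subset. -/
lemma exists_maxAvoiding_superset {d : ℕ} {z : Pt d} {S Y : Set (Pt d)} (hS : S.Finite)
    (hYS : Y ⊆ S) (hY : IsZAvoiding d z Y) :
    ∃ X ∈ MaxAvoiding d z S, Y ⊆ X := by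
  set F : Set (Set (Pt d)) := {B | B ⊆ S ∧ Y ⊆ B ∧ IsZAvoiding d z B} with hF
  have hFfin : F.Finite := hS.finite_subsets.subset fun B hB => hB.1
  have hFne : F.Nonempty := ⟨Y, hYS, subset_rfl, hY⟩
  obtain ⟨X, hXF, hmax⟩ := Set.Finite.exists_maximalFor id F hFfin hFne
  refine ⟨X, ⟨hXF.1, hXF.2.2, fun B hBS hXB hB => ?_⟩, hXF.2.1⟩
  have : X = B := le_antisymm hXB.subset (hmax ⟨hBS, hXF.2.1.trans hXB.subset, hB⟩ hXB.subset)
  exact hXB.ne this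

theorem maxAvoiding_card_eq_card_erase_add_card_new
    (d : ℕ) (S : Set (Pt d)) (hS : S.Finite) (z : Pt d) (hzS : z ∉ S) (s : Pt d)
    (hsS : s ∈ S) :
    (MaxAvoiding d z S).ncard =
      (MaxAvoiding d z (S \ {s})).ncard + (MaxAvoidingNew d z S s).ncard := by
  have hAfin : (MaxAvoiding d z S).Finite :=
    hS.finite_subsets.subset fun B hB => hB.1
  have hNsub : MaxAvoidingNew d z S s ⊆ MaxAvoiding d z S := fun X hX => hX.1
  -- key bijection: X ↦ X \ {s}
  have hmaps : ∀ X ∈ MaxAvoiding d z S \ MaxAvoidingNew d z S s,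
      X \ {s} ∈ MaxAvoiding d z (S \ {s}) := by
    rintro X ⟨hX, hXN⟩
    by_cases hsX : s ∈ X
    · by_contra hbad
      exact hXN ⟨hX, hsX, hbad⟩
    · have hXd : X \ {s} = X := Set.diff_singleton_eq_self hsX
      rw [hXd]
      refine ⟨Set.subset_diff_singleton hX.1 hsX, hX.2.1, fun B hBS hXB => ?_⟩
      exact hX.2.2 B (hBS.trans Set.diff_subset) hXB
  have hinj : Set.InjOn (fun X => X \ {s}) (MaxAvoiding d z S \ MaxAvoidingNew d z S s) := by
    rintro X ⟨hX, hXN⟩ Y ⟨hY, hYN⟩ hXY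
    simp only at hXY
    by_cases hsX : s ∈ X <;> by_cases hsY : s ∈ Y
    · calc X = X \ {s} ∪ {s} := by
              rw [Set.diff_union_self, Set.union_eq_self_of_subset_right
                (Set.singleton_subset_iff.2 hsX)]
           _ = Y \ {s} ∪ {s} := by rw [hXY]
           _ = Y := by
              rw [Set.diff_union_self, Set.union_eq_self_of_subset_right
                (Set.singleton_subset_iff.2 hsY)]
    · -- s ∈ X, s ∉ Y : then Y = X \ {s} ⊂ X, contradicting maximality of Y
      exfalso
      have hYX : Y ⊂ X := by
        rw [show Y = X \ {s} from by rw [hXY, Set.diff_singleton_eq_self hsY]]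
        exact Set.sdiff_singleton_ssubset.2 hsX
      exact hY.2.2 X hX.1 hYX hX.2.1
    · exfalso
      have hXY' : X ⊂ Y := by
        rw [show X = Y \ {s} from by rw [← hXY, Set.diff_singleton_eq_self hsX]]
        exact Set.sdiff_singleton_ssubset.2 hsY
      exact hX.2.2 Y hY.1 hXY' hY.2.1
    · rw [Set.diff_singleton_eq_self hsX, Set.diff_singleton_eq_self hsY] at hXY
      exact hXY
  have hsurj : ∀ A ∈ MaxAvoiding d z (S \ {s}),
      ∃ X ∈ MaxAvoiding d z S \ MaxAvoidingNew d z S s, X \ {s} = A := by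
    intro A hA
    have hsA : s ∉ A := fun h => (hA.1 h).2 rfl
    by_cases hAs : IsZAvoiding d z (A ∪ {s})
    · -- extend A ∪ {s} to a maximal avoiding subset X of S
      obtain ⟨X, hX, hsub⟩ := exists_maxAvoiding_superset hS
        (Set.union_subset (hA.1.trans Set.diff_subset) (Set.singleton_subset_iff.2 hsS)) hAs
      have hsX : s ∈ X := hsub (Set.mem_union_right _ rfl)
      have hXA : X \ {s} = A := by
        by_contra hne
        have hsub' : A ⊆ X \ {s} :=
          Set.subset_diff_singleton (fun a ha => hsub (Set.mem_union_left _ ha)) hsA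
        have hAX : A ⊂ X \ {s} :=
          ⟨hsub', fun h => hne (Set.Subset.antisymm h hsub')⟩
        exact hA.2.2 (X \ {s}) (Set.diff_subset_diff_left hX.1) hAX
          (avoiding_mono Set.diff_subset hX.2.1)
      refine ⟨X, ⟨hX, fun hN => hN.2.2 (hXA ▸ hA)⟩, hXA⟩
    · -- A itself is maximal in S
      have hAmax : A ∈ MaxAvoiding d z S := by
        refine ⟨hA.1.trans Set.diff_subset, hA.2.1, fun B hBS hAB hB => ?_⟩
        by_cases hsB : s ∈ B
        · exact hAs (avoiding_mono (Set.union_subset hAB.subset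
            (Set.singleton_subset_iff.2 hsB)) hB)
        · exact hA.2.2 B (Set.subset_diff_singleton hBS hsB) hAB hB
      exact ⟨A, ⟨hAmax, fun hN => hsA hN.2.1⟩, Set.diff_singleton_eq_self hsA⟩
  have himg : (fun X => X \ {s}) '' (MaxAvoiding d z S \ MaxAvoidingNew d z S s) =
      MaxAvoiding d z (S \ {s}) := by
    apply Set.Subset.antisymm
    · rintro _ ⟨X, hX, rfl⟩; exact hmaps X hX
    · intro A hA
      obtain ⟨X, hX, hXA⟩ := hsurj A hA
      exact ⟨X, hX, hXA⟩
  have h1 : (MaxAvoiding d z (S \ {s})).ncard =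
      (MaxAvoiding d z S \ MaxAvoidingNew d z S s).ncard := by
    rw [← himg, Set.ncard_image_of_injOn hinj]
  rw [h1, Set.ncard_diff_add_ncard_of_subset hNsub hAfin]
end

section
/- Let S be a finite set of points in ℝ^d, let z ∈ ℝ^d \ S be in general position with respect to S, suppose |S| ≥ d + 2 and S is a z-containing set. Then there exist a point u ∈ S, a set X contained in the set of extreme points of conv(S) with X affinely independent and |X| = d + 1, a subset T ⊆ X with |T| = d, a nonzero linear functional f on ℝ^d, and a real number c, such that: z lies in the interior of conv(X); f(t) = c for every t ∈ T and f(x) ≤ c for every x ∈ S (so the hyperplane {f = c} spanned by T is a common facet hyperplane of the simplex conv(X) and of conv(S)); f(u) = c; and S \ {u} is a z-containing set. -/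
open Set Module

lemma mink {d : ℕ} {S : Set (Pt d)} (hS : S.Finite) :
    convexHull ℝ (Set.extremePoints ℝ (convexHull ℝ S)) = convexHull ℝ S := by
  have hE : Set.extremePoints ℝ (convexHull ℝ S) ⊆ S := extremePoints_convexHull_subset
  have h1 := closure_convexHull_extremePoints (hS.isCompact_convexHull (𝕜 := ℝ)) (convex_convexHull ℝ S)
  rwa [IsClosed.closure_eq ((hS.subset hE).isCompact_convexHull (𝕜 := ℝ)).isClosed] at h1

lemma lem1 {d : ℕ} {z : Pt d} {S A : Set (Pt d)} (hgen : GenPos d z S) (hA : A ⊆ S)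
    (hz : z ∈ convexHull ℝ A) :
    ∃ Y : Set (Pt d), Y ⊆ A ∧ AffineIndependent ℝ ((↑) : Y → Pt d) ∧ Y.ncard = d + 1 ∧
      z ∈ interior (convexHull ℝ Y) := by
  obtain ⟨ι, hfin, p, w, hrange, hindep, hpos, hsum, hcomb⟩ :=
    eq_pos_convex_span_of_mem_convexHull hz
  letI := hfin
  have hne : Nonempty ι := by
    by_contra h
    rw [not_nonempty_iff] at h
    rw [Finset.univ_eq_empty, Finset.sum_empty] at hsum
    exact zero_ne_one hsum
  have hz_aff : z = Finset.univ.affineCombination ℝ p w := by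
    rw [Finset.univ.affineCombination_eq_linear_combination p w hsum]; exact hcomb.symm
  have hz_span : z ∈ affineSpan ℝ (Set.range p) := by
    rw [hz_aff]; exact affineCombination_mem_affineSpan hsum p
  obtain ⟨n, hn⟩ : ∃ n, Fintype.card ι = n + 1 :=
    ⟨Fintype.card ι - 1, (Nat.succ_pred_eq_of_pos Fintype.card_pos).symm⟩
  have hfr : finrank ℝ (vectorSpan ℝ (Set.range p)) = n := hindep.finrank_vectorSpan hn
  have hd : finrank ℝ (Pt d) = d := finrank_euclideanSpace_fin
  have hrankle : n ≤ d := by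
    have h2 : finrank ℝ (vectorSpan ℝ (Set.range p)) ≤ finrank ℝ (Pt d) := Submodule.finrank_le _
    omega
  have hrankge : d ≤ n := by
    by_contra h
    push_neg at h
    exact hgen (Set.range p) (hrange.trans hA) (by omega) hz_span
  have hcard : Fintype.card ι = d + 1 := by omega
  have htot : affineSpan ℝ (Set.range p) = ⊤ :=
    hindep.affineSpan_eq_top_iff_card_eq_finrank_add_one.mpr (by rw [hcard, hd])
  let b : AffineBasis ι ℝ (Pt d) := ⟨p, hindep, htot⟩
  have hcoord : ∀ i, b.coord i z = w i := fun i => by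
    rw [hz_aff]; exact b.coord_apply_combination_of_mem (Finset.mem_univ i) hsum
  have hint : z ∈ interior (convexHull ℝ (Set.range p)) := by
    have h3 := b.interior_convexHull
    rw [show Set.range ⇑b = Set.range p from rfl] at h3
    rw [h3]
    exact fun i => (hcoord i) ▸ hpos i
  refine ⟨Set.range p, hrange, hindep.range, ?_, hint⟩
  rw [← Nat.card_coe_set_eq, Nat.card_range_of_injective hindep.injective,
    Nat.card_eq_fintype_card, hcard]

lemma swap_lemma {d : ℕ} {z s₀ : Pt d} {Y : Set (Pt d)}
    (hAI : AffineIndependent ℝ ((↑) : Y → Pt d)) (hY : Y.ncard = d + 1)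
    (hzint : z ∈ interior (convexHull ℝ Y)) (hs₀ : s₀ ∈ convexHull ℝ Y) :
    ∃ t ∈ Y, z ∈ convexHull ℝ ((Y \ {t}) ∪ {s₀}) := by
  classical
  have hfin : Y.Finite := Set.finite_of_ncard_ne_zero (by omega)
  letI := hfin.fintype
  have hcard : Fintype.card Y = d + 1 := by
    rw [← Set.toFinset_card, ← Set.ncard_eq_toFinset_card', hY]
  have htot : affineSpan ℝ (Set.range ((↑) : Y → Pt d)) = ⊤ :=
    hAI.affineSpan_eq_top_iff_card_eq_finrank_add_one.mpr
      (by rw [hcard, finrank_euclideanSpace_fin])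
  let b : AffineBasis Y ℝ (Pt d) := ⟨_, hAI, htot⟩
  have hrange : Set.range (⇑b) = Y := Subtype.range_coe
  set lam := fun i : Y => b.coord i z with hlamdef
  set mu := fun i : Y => b.coord i s₀ with hmudef
  have hlam : ∀ i, 0 < lam i := by
    have h3 := b.interior_convexHull
    rw [hrange] at h3
    rw [h3] at hzint
    exact hzint
  have hlamsum : ∑ i, lam i = 1 := b.sum_coord_apply_eq_one z
  have hmusum : ∑ i, mu i = 1 := b.sum_coord_apply_eq_one s₀
  have hz_eq : ∑ i, lam i • (i : Pt d) = z := b.linear_combination_coord_eq_self z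
  have hs_eq : ∑ i, mu i • (i : Pt d) = s₀ := b.linear_combination_coord_eq_self s₀
  obtain ⟨i₀, hi₀⟩ : ∃ i, 0 < mu i := by
    by_contra h
    push_neg at h
    have : (∑ i, mu i) ≤ 0 := Finset.sum_nonpos (fun i _ => h i)
    linarith
  obtain ⟨j, hjP, hmin⟩ := Finset.exists_min_image
    (Finset.univ.filter fun i => 0 < mu i) (fun i => lam i / mu i) ⟨i₀, by simp [hi₀]⟩
  have hmuj : 0 < mu j := (Finset.mem_filter.mp hjP).2
  set α := lam j / mu j with hαdef
  have hα : 0 < α := div_pos (hlam _) hmuj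
  have hv : ∀ i, 0 ≤ lam i - α * mu i := by
    intro i
    by_cases h : 0 < mu i
    · have h1 : α ≤ lam i / mu i := hmin i (by simp [h])
      have h2 : α * mu i ≤ lam i := (le_div_iff₀ h).mp h1
      linarith
    · push_neg at h
      nlinarith [hlam i]
  have hvj : lam j - α * mu j = 0 := by
    rw [hαdef, div_mul_cancel₀]
    · ring
    · exact ne_of_gt hmuj
  set wfun : Option Y → ℝ := fun o => o.elim α (fun i => lam i - α * mu i) with hwdef
  set pfun : Option Y → Pt d := fun o => o.elim s₀ (fun i => (i : Pt d)) with hpdef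
  set t : Finset (Option Y) := Finset.univ.erase (some j) with htdef
  have hsum' : ∑ o ∈ t, wfun o = 1 := by
    rw [htdef, Finset.sum_erase _ (by simpa [hwdef] using hvj)]
    rw [Fintype.sum_option]
    simp only [hwdef, Option.elim]
    rw [Finset.sum_sub_distrib, ← Finset.mul_sum, hlamsum, hmusum]
    ring
  have hptsum : ∑ o ∈ t, wfun o • pfun o = z := by
    rw [htdef, Finset.sum_erase _ (by simp [hwdef, hpdef, hvj])]
    rw [Fintype.sum_option]
    simp only [hwdef, hpdef, Option.elim]
    have : ∑ i : Y, (lam i - α * mu i) • (i : Pt d)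
        = (∑ i, lam i • (i : Pt d)) - α • (∑ i, mu i • (i : Pt d)) := by
      rw [Finset.smul_sum, ← Finset.sum_sub_distrib]
      congr 1
      ext i
      rw [sub_smul, smul_smul]
    rw [this, hz_eq, hs_eq]
    abel
  refine ⟨(j : Pt d), j.2, ?_⟩
  have hmem : t.centerMass wfun pfun ∈ convexHull ℝ ((Y \ {(j : Pt d)}) ∪ {s₀}) := by
    apply Finset.centerMass_mem_convexHull
    · intro o ho
      rcases o with _ | i
      · exact le_of_lt hα
      · exact hv i
    · rw [hsum']; norm_num
    · intro o ho
      rcases o with _ | i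
      · exact Set.mem_union_right _ rfl
      · have hij : i ≠ j := by
          intro h
          rw [htdef] at ho
          exact (Finset.ne_of_mem_erase ho) (by rw [h])
        refine Set.mem_union_left _ ⟨i.2, ?_⟩
        simp only [Set.mem_singleton_iff]
        exact fun h => hij (Subtype.coe_injective h)
  rwa [Finset.centerMass_eq_of_sum_1 _ _ hsum', hptsum] at hmem

lemma apex {d : ℕ} {S : Set (Pt d)} (hS : S.Finite) {z : Pt d} (hzS : z ∉ S)
    (hgen : GenPos d z S) (hzint : z ∈ interior (convexHull ℝ S)) {x : Pt d}
    (hx : x ∈ Set.extremePoints ℝ (convexHull ℝ S)) :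
    ∃ (f : Pt d →L[ℝ] ℝ) (c : ℝ) (Y : Set (Pt d)),
      x ∈ Y ∧ Y ⊆ Set.extremePoints ℝ (convexHull ℝ S) ∧
      AffineIndependent ℝ ((↑) : Y → Pt d) ∧ Y.ncard = d + 1 ∧
      z ∈ interior (convexHull ℝ Y) ∧ (∀ t ∈ Y \ {x}, f t = c) ∧
      (∀ p ∈ convexHull ℝ S, f p ≤ c) ∧ f x < c := by
  classical
  set K := convexHull ℝ S with hKdef
  set E := Set.extremePoints ℝ (convexHull ℝ S) with hEdef
  have hES : E ⊆ S := extremePoints_convexHull_subset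
  have hxS : x ∈ S := hES hx
  have hxK : x ∈ K := subset_convexHull ℝ S hxS
  have hKcomp : IsCompact K := hS.isCompact_convexHull (𝕜 := ℝ)
  have hKconv : Convex ℝ K := convex_convexHull ℝ S
  have hzx : z ≠ x := fun h => hzS (h ▸ hxS)
  have hnorm : 0 < ‖z - x‖ := by rwa [norm_pos_iff, sub_ne_zero]
  set g : ℝ → Pt d := fun s => x + s • (z - x) with hgdef
  have hgcont : Continuous g := by
    apply continuous_const.add
    exact continuous_id.smul continuous_const
  set A := {s : ℝ | g s ∈ K} with hAdef
  have h1A : (1:ℝ) ∈ A := by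
    show x + (1:ℝ) • (z - x) ∈ K
    rw [one_smul, add_sub_cancel]
    exact interior_subset hzint
  have hAclosed : IsClosed A := hKcomp.isClosed.preimage hgcont
  have hAbdd : BddAbove A := by
    obtain ⟨M, hM⟩ := hKcomp.isBounded.subset_closedBall (0 : Pt d)
    refine ⟨(M + ‖x‖) / ‖z - x‖, fun s hs => ?_⟩
    have h1 : ‖g s‖ ≤ M := by
      have := hM hs
      simpa [dist_eq_norm] using this
    have h2 : ‖s • (z - x)‖ ≤ M + ‖x‖ := by
      have : s • (z - x) = g s - x := by simp [hgdef]
      rw [this]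
      calc ‖g s - x‖ ≤ ‖g s‖ + ‖x‖ := norm_sub_le _ _
        _ ≤ M + ‖x‖ := by linarith
    rw [norm_smul, Real.norm_eq_abs] at h2
    rw [le_div_iff₀ hnorm]
    calc s * ‖z - x‖ ≤ |s| * ‖z - x‖ := by
          apply mul_le_mul_of_nonneg_right (le_abs_self s) (le_of_lt hnorm)
      _ ≤ M + ‖x‖ := h2
  have hAne : A.Nonempty := ⟨1, h1A⟩
  set σ := sSup A with hσdef
  have hσA : σ ∈ A := hAclosed.csSup_mem hAne hAbdd
  have hσ1 : 1 ≤ σ := le_csSup hAbdd h1A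
  have hσgt : 1 < σ := by
    obtain ⟨ε, hε, hball⟩ := Metric.isOpen_iff.mp isOpen_interior z hzint
    set δ := ε / (2 * ‖z - x‖) with hδdef
    have hδ : 0 < δ := div_pos hε (by positivity)
    have hmem : g (1 + δ) ∈ K := by
      apply interior_subset
      apply hball
      rw [Metric.mem_ball, dist_eq_norm]
      have : g (1 + δ) - z = δ • (z - x) := by
        simp only [hgdef]
        rw [add_smul, one_smul]
        abel
      rw [this, norm_smul, Real.norm_eq_abs, abs_of_pos hδ, hδdef]
      rw [div_mul_eq_mul_div, mul_comm]
      rw [div_lt_iff₀ (by positivity)]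
      nlinarith
    have := le_csSup hAbdd hmem
    linarith
  set b := g σ with hbdef
  have hbK : b ∈ K := hσA
  have hbnotint : b ∉ interior K := by
    intro hbint
    obtain ⟨ε, hε, hball⟩ := Metric.isOpen_iff.mp isOpen_interior b hbint
    set δ := ε / (2 * ‖z - x‖) with hδdef
    have hδ : 0 < δ := div_pos hε (by positivity)
    have hmem : g (σ + δ) ∈ K := by
      apply interior_subset
      apply hball
      rw [Metric.mem_ball, dist_eq_norm]
      have : g (σ + δ) - b = δ • (z - x) := by
        simp only [hgdef, hbdef]
        rw [add_smul]
        abel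
      rw [this, norm_smul, Real.norm_eq_abs, abs_of_pos hδ, hδdef]
      rw [div_mul_eq_mul_div, mul_comm]
      rw [div_lt_iff₀ (by positivity)]
      nlinarith
    have := le_csSup hAbdd hmem
    linarith
  obtain ⟨f, c, hfc1, hfc2⟩ := geometric_hahn_banach_open hKconv.interior isOpen_interior
    (convex_singleton b) (Set.disjoint_singleton_right.mpr hbnotint)
  have hfb : c ≤ f b := hfc2 b rfl
  have hfz : f z < c := hfc1 z hzint
  have hKle : ∀ p ∈ K, f p ≤ c := by
    intro p hp
    by_contra h
    push_neg at h
    have hne : f p - f z ≠ 0 := by linarith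
    set θ := (f p - c) / (f p - f z) with hθdef
    have hθ1 : 0 < θ := div_pos (by linarith) (by linarith)
    have hθ2 : θ ≤ 1 := by
      rw [hθdef, div_le_one (by linarith)]
      linarith
    have hcomb : θ • z + (1 - θ) • p ∈ interior K :=
      hKconv.combo_interior_self_mem_interior hzint hp hθ1 (by linarith) (by ring)
    have hlt := hfc1 _ hcomb
    rw [map_add, map_smul, map_smul] at hlt
    simp only [smul_eq_mul] at hlt
    have heq : θ * f z + (1 - θ) * f p = c := by
      rw [hθdef]
      field_simp
      ring
    linarith
  have hfbc : f b = c := le_antisymm (hKle b hbK) hfb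
  have hσne : σ ≠ 0 := by linarith
  have hz_eq : z = x + σ⁻¹ • (b - x) := by
    have h1 : b - x = σ • (z - x) := by
      rw [hbdef]
      show x + σ • (z - x) - x = σ • (z - x)
      abel
    rw [h1, smul_smul, inv_mul_cancel₀ hσne, one_smul]
    abel
  have hfxc : f x < c := by
    rcases (hKle x hxK).lt_or_eq with h | h
    · exact h
    · exfalso
      have : f z = c := by
        rw [hz_eq, map_add, map_smul]
        simp only [smul_eq_mul, map_sub]
        rw [hfbc, h]
        ring
      linarith
  have hEfin : E.Finite := hS.subset hES
  have hbE : b ∈ convexHull ℝ E := by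
    rw [hEdef, mink hS]
    exact hbK
  rw [← Set.Finite.coe_toFinset hEfin, Finset.convexHull_eq] at hbE
  obtain ⟨w, hw0, hw1, hwb⟩ := hbE
  set EF := hEfin.toFinset with hEFdef
  have hbsum : ∑ y ∈ EF, w y • y = b := by
    rw [← Finset.centerMass_eq_of_sum_1 _ _ hw1]
    exact hwb
  have hfle : ∀ y ∈ EF, f y ≤ c := by
    intro y hy
    apply hKle
    apply subset_convexHull ℝ S
    exact hES (hEfin.mem_toFinset.mp hy)
  have hzero : ∀ y ∈ EF, w y * (c - f y) = 0 := by
    apply (Finset.sum_eq_zero_iff_of_nonneg ?_).mp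
    · have : ∑ y ∈ EF, w y * (c - f y) = c * (∑ y ∈ EF, w y) - f (∑ y ∈ EF, w y • y) := by
        rw [map_sum]
        rw [Finset.mul_sum, ← Finset.sum_sub_distrib]
        congr 1
        ext y
        rw [map_smul]
        simp only [smul_eq_mul]
        ring
      rw [this, hw1, hbsum, hfbc]
      ring
    · intro y hy
      have := hfle y hy
      have := hw0 y hy
      nlinarith
  have hbH : b ∈ convexHull ℝ (E ∩ {p | f p = c}) := by
    have h4 : (EF.filter (fun y => w y ≠ 0)).centerMass w id = b := by
      rw [Finset.centerMass_filter_ne_zero]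
      exact hwb
    rw [← h4]
    apply Finset.centerMass_mem_convexHull
    · intro y hy
      exact hw0 y (Finset.mem_of_mem_filter y hy)
    · rw [Finset.sum_filter_ne_zero, hw1]
      norm_num
    · intro y hy
      rw [Finset.mem_filter] at hy
      refine ⟨hEfin.mem_toFinset.mp hy.1, ?_⟩
      have := hzero y hy.1
      have hfy := hfle y hy.1
      have : c - f y = 0 := by
        rcases mul_eq_zero.mp this with h | h
        · exact absurd h hy.2
        · exact h
      show f (id y) = c
      simp only [id]
      linarith
  have hz_seg : z ∈ convexHull ℝ (insert x (E ∩ {p | f p = c})) := by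
    have hxmem : x ∈ convexHull ℝ (insert x (E ∩ {p | f p = c})) :=
      subset_convexHull _ _ (Set.mem_insert _ _)
    have hbmem : b ∈ convexHull ℝ (insert x (E ∩ {p | f p = c})) :=
      convexHull_mono (Set.subset_insert _ _) hbH
    have hcvx := convex_convexHull ℝ (insert x (E ∩ {p | f p = c}))
    have hzc : z = σ⁻¹ • b + (1 - σ⁻¹) • x := by
      rw [hz_eq]
      rw [smul_sub, sub_smul, one_smul]
      abel
    rw [hzc]
    have hσinv : 0 ≤ σ⁻¹ := by positivity
    have hσinv1 : σ⁻¹ ≤ 1 := by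
      rw [inv_le_one_iff₀]
      right; linarith
    exact hcvx hbmem hxmem hσinv (by linarith) (by ring)
  have hsubS : insert x (E ∩ {p | f p = c}) ⊆ S :=
    Set.insert_subset hxS ((Set.inter_subset_left).trans hES)
  obtain ⟨Y, hYsub, hYAI, hYcard, hYint⟩ := lem1 hgen hsubS hz_seg
  have hxY : x ∈ Y := by
    by_contra hxY
    have hYH : Y ⊆ {p : Pt d | f p = c} := by
      intro y hy
      rcases Set.mem_insert_iff.mp (hYsub hy) with h | h
      · exact absurd (h ▸ hy) hxY
      · exact h.2
    have hcl : Convex ℝ {p : Pt d | f p = c} :=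
      convex_hyperplane ⟨f.map_add, f.map_smul⟩ c
    have h5 : z ∈ {p : Pt d | f p = c} := by
      have := convexHull_mono hYH (interior_subset hYint)
      rwa [hcl.convexHull_eq] at this
    have : f z = c := h5
    linarith
  refine ⟨f, c, Y, hxY, ?_, hYAI, hYcard, hYint, ?_, ?_, hfxc⟩
  · intro y hy
    rcases Set.mem_insert_iff.mp (hYsub hy) with h | h
    · rw [h]; exact hx
    · exact h.1
  · intro t ht
    rcases Set.mem_insert_iff.mp (hYsub ht.1) with h | h
    · exact absurd h ht.2
    · exact h.2
  · exact hKle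

theorem exists_simplex_with_common_facet_hyperplane
    (d : ℕ) (S : Set (Pt d)) (hS : S.Finite) (z : Pt d) (hzS : z ∉ S)
    (hgen : GenPos d z S) (hcard : d + 2 ≤ S.ncard) (hScont : IsZContaining d z S) :
    ∃ u ∈ S, ∃ X ⊆ Set.extremePoints ℝ (convexHull ℝ S),
      AffineIndependent ℝ ((↑) : X → Pt d) ∧ X.ncard = d + 1 ∧
      ∃ T ⊆ X, T.ncard = d ∧
        ∃ f : Pt d →ₗ[ℝ] ℝ, f ≠ 0 ∧ ∃ c : ℝ,
          z ∈ interior (convexHull ℝ X) ∧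
          (∀ t ∈ T, f t = c) ∧ (∀ x ∈ S, f x ≤ c) ∧
          f u = c ∧ IsZContaining d z (S \ {u}) := by
  classical
  rcases Nat.eq_zero_or_pos d with hd0 | hdpos
  · exfalso
    subst hd0
    have hss : S.Subsingleton := fun a _ b _ => by ext i; exact i.elim0
    rcases hss.eq_empty_or_singleton with h | ⟨a, h⟩ <;> subst h <;> simp [Set.ncard_singleton] at hcard
  have hzK : z ∈ interior (convexHull ℝ S) := hScont
  set E := Set.extremePoints ℝ (convexHull ℝ S) with hEdef
  have hES : E ⊆ S := extremePoints_convexHull_subset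
  have hEfin : E.Finite := hS.subset hES
  have hEne : E.Nonempty := by
    by_contra h
    rw [Set.not_nonempty_iff_eq_empty] at h
    have hm := mink hS
    rw [← hEdef, h, convexHull_empty] at hm
    have : z ∈ (∅ : Set (Pt d)) := by rw [hm]; exact interior_subset hzK
    exact this
  have hch : ∀ x ∈ E, ∃ (f : Pt d →L[ℝ] ℝ) (c : ℝ) (Y : Set (Pt d)),
      x ∈ Y ∧ Y ⊆ E ∧ AffineIndependent ℝ ((↑) : Y → Pt d) ∧ Y.ncard = d + 1 ∧
      z ∈ interior (convexHull ℝ Y) ∧ (∀ t ∈ Y \ {x}, f t = c) ∧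
      (∀ p ∈ convexHull ℝ S, f p ≤ c) ∧ f x < c :=
    fun x hx => apex hS hzS hgen hzK hx
  choose F C Y hxY hYE hYAI hYcard hYint hYface hYle hYlt using hch
  by_contra hgoal
  have hYS : ∀ x (hx : x ∈ E), Y x hx ⊆ S := fun x hx => (hYE x hx).trans hES
  have hYfin : ∀ x (hx : x ∈ E), (Y x hx).Finite := fun x hx => hS.subset (hYS x hx)
  have hzY : ∀ x (hx : x ∈ E), z ∈ convexHull ℝ (Y x hx) :=
    fun x hx => interior_subset (hYint x hx)
  have hTcard : ∀ x (hx : x ∈ E), (Y x hx \ {x}).ncard = d := by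
    intro x hx
    rw [Set.ncard_diff (Set.singleton_subset_iff.mpr (hxY x hx)) (Set.finite_singleton x),
      hYcard, Set.ncard_singleton]
    omega
  have hNR : ∀ x (hx : x ∈ E), ∀ u ∈ S, F x hx u = C x hx → z ∉ convexHull ℝ (S \ {u}) := by
    intro x hx u huS hfu hmem
    obtain ⟨Y', hY'sub, _, _, hY'int⟩ := lem1 hgen Set.diff_subset hmem
    apply hgoal
    refine ⟨u, huS, Y x hx, hYE x hx, hYAI x hx, hYcard x hx, Y x hx \ {x}, Set.diff_subset,
      hTcard x hx, (F x hx : Pt d →ₗ[ℝ] ℝ), ?_, C x hx, hYint x hx, hYface x hx, ?_, hfu, ?_⟩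
    · intro h0
      have h1 : F x hx x = 0 := by
        show (F x hx : Pt d →ₗ[ℝ] ℝ) x = 0
        rw [h0]; rfl
      have h2 : F x hx u = 0 := by
        show (F x hx : Pt d →ₗ[ℝ] ℝ) u = 0
        rw [h0]; rfl
      have h3 := hYlt x hx
      rw [h1, ← hfu, h2] at h3
      exact lt_irrefl _ h3
    · exact fun p hp => hYle x hx p (subset_convexHull ℝ S hp)
    · exact interior_mono (convexHull_mono hY'sub) hY'int
  have hmemN : ∀ t, z ∉ convexHull ℝ (S \ {t}) →
      ∀ A, A ⊆ S → z ∈ convexHull ℝ A → t ∈ A := by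
    intro t hnr A hA hzA
    by_contra htA
    refine hnr (convexHull_mono ?_ hzA)
    intro a ha
    exact ⟨hA ha, fun h => htA (h ▸ ha)⟩
  obtain ⟨x₀, hx₀⟩ := hEne
  have hT₀NR : ∀ t ∈ Y x₀ hx₀ \ {x₀}, z ∉ convexHull ℝ (S \ {t}) := by
    intro t ht
    exact hNR x₀ hx₀ t (hYS x₀ hx₀ ht.1) (hYface x₀ hx₀ t ht)
  have hT₀ne : (Y x₀ hx₀ \ {x₀}).Nonempty :=
    Set.nonempty_of_ncard_ne_zero (by rw [hTcard x₀ hx₀]; omega)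
  obtain ⟨t₀, ht₀⟩ := hT₀ne
  have ht₀E : t₀ ∈ E := hYE x₀ hx₀ ht₀.1
  have hsub1 : Y x₀ hx₀ \ {x₀} ⊆ Y t₀ ht₀E := fun t ht =>
    hmemN t (hT₀NR t ht) _ (hYS t₀ ht₀E) (hzY t₀ ht₀E)
  have hT₁NR : ∀ t ∈ Y t₀ ht₀E \ {t₀}, z ∉ convexHull ℝ (S \ {t}) := by
    intro t ht
    exact hNR t₀ ht₀E t (hYS t₀ ht₀E ht.1) (hYface t₀ ht₀E t ht)
  have hsub2 : Y t₀ ht₀E \ {t₀} ⊆ Y x₀ hx₀ := fun t ht =>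
    hmemN t (hT₁NR t ht) _ (hYS x₀ hx₀) (hzY x₀ hx₀)
  have hsub3 : Y t₀ ht₀E \ {t₀} ⊆ Y x₀ hx₀ \ {t₀} := by
    intro t ht
    exact ⟨hsub2 ht, ht.2⟩
  have ht₀Y₁ : t₀ ∈ Y t₀ ht₀E := hsub1 ht₀
  have hc1 : (Y t₀ ht₀E \ {t₀}).ncard = d := hTcard t₀ ht₀E
  have hc2 : (Y x₀ hx₀ \ {t₀}).ncard = d := by
    rw [Set.ncard_diff (Set.singleton_subset_iff.mpr ht₀.1) (Set.finite_singleton t₀),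
      hYcard, Set.ncard_singleton]
    omega
  have heq : Y t₀ ht₀E \ {t₀} = Y x₀ hx₀ \ {t₀} :=
    Set.eq_of_subset_of_ncard_le hsub3 (by rw [hc1, hc2]) ((hYfin x₀ hx₀).diff)
  have hx₀Y₁ : x₀ ∈ Y t₀ ht₀E \ {t₀} := by
    rw [heq]
    exact ⟨hxY x₀ hx₀, fun h => ht₀.2 (by rw [← h]; rfl)⟩
  have hY₀NR : ∀ t ∈ Y x₀ hx₀, z ∉ convexHull ℝ (S \ {t}) := by
    intro t ht
    by_cases h : t = x₀
    · subst h
      exact hT₁NR t hx₀Y₁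
    · exact hT₀NR t (by exact ⟨ht, h⟩)
  have hEY₀ : E ⊆ Y x₀ hx₀ := by
    intro x hxE
    have hsub : Y x₀ hx₀ ⊆ Y x hxE := fun t ht =>
      hmemN t (hY₀NR t ht) _ (hYS x hxE) (hzY x hxE)
    have heq2 : Y x₀ hx₀ = Y x hxE :=
      Set.eq_of_subset_of_ncard_le hsub (by rw [hYcard, hYcard]) (hYfin x hxE)
    rw [heq2]
    exact hxY x hxE
  have hsne : (S \ Y x₀ hx₀).Nonempty := by
    rw [Set.diff_nonempty]
    intro hsub
    have := Set.ncard_le_ncard hsub (hYfin x₀ hx₀)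
    rw [hYcard x₀ hx₀] at this
    omega
  obtain ⟨s₀, hs₀S, hs₀Y₀⟩ := hsne
  have hs₀conv : s₀ ∈ convexHull ℝ (Y x₀ hx₀) := by
    have h1 : s₀ ∈ convexHull ℝ S := subset_convexHull ℝ S hs₀S
    rw [← mink hS] at h1
    exact convexHull_mono hEY₀ h1
  obtain ⟨tt, httY₀, hzmem⟩ := swap_lemma (hYAI x₀ hx₀) (hYcard x₀ hx₀) (hYint x₀ hx₀) hs₀conv
  apply hY₀NR tt httY₀
  refine convexHull_mono ?_ hzmem
  intro a ha
  rcases ha with ⟨haY, hane⟩ | ha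
  · exact ⟨hYS x₀ hx₀ haY, hane⟩
  · rw [Set.mem_singleton_iff] at ha
    subst ha
    refine ⟨hs₀S, fun h => ?_⟩
    rw [Set.mem_singleton_iff] at h
    subst h
    exact hs₀Y₀ httY₀
end
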